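/- arXiv:2012.11465 — 5 statements merged into one kernel-verified Lean document; each statement's English description precedes it below -/
import Mathlib

section
/- Let f₁, f₂ : [0,∞) × ℝ → ℝ be continuous functions with f₁(t,x) < f₂(t,x) for all (t,x), and let X₁, X₂ : [0,∞) → ℝ be continuous functions satisfying Xᵢ(t) = X₀ + ∫₀ᵗ fᵢ(s, Xᵢ(s)) ds for all t ≥ 0 and i = 1,2, with the same initial value X₀ ∈ ℝ. Then X₁(t) < X₂(t) for every t > 0. -/
open MeasureTheory Set

/-- Strict comparison principle for integral equations with strictly ordered drifts. -/
theorem stmt0 (f₁ f₂ : ℝ → ℝ → ℝ) (X₁ X₂ : ℝ → ℝ) (X₀ : ℝ)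
    (hf₁ : ContinuousOn (fun p : ℝ × ℝ => f₁ p.1 p.2) (Set.Ici 0 ×ˢ Set.univ))
    (hf₂ : ContinuousOn (fun p : ℝ × ℝ => f₂ p.1 p.2) (Set.Ici 0 ×ˢ Set.univ))
    (hlt : ∀ t x, 0 ≤ t → f₁ t x < f₂ t x)
    (hX₁ : Continuous X₁) (hX₂ : Continuous X₂)
    (h₁ : ∀ t, 0 ≤ t → X₁ t = X₀ + ∫ s in (0:ℝ)..t, f₁ s (X₁ s))
    (h₂ : ∀ t, 0 ≤ t → X₂ t = X₀ + ∫ s in (0:ℝ)..t, f₂ s (X₂ s)) :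
    ∀ t, 0 < t → X₁ t < X₂ t := by
  -- continuity of the integrands
  have hc₁ : ContinuousOn (fun s => f₁ s (X₁ s)) (Ici (0:ℝ)) := by
    exact hf₁.comp ((continuous_id.prodMk hX₁).continuousOn)
      (fun s hs => ⟨hs, mem_univ _⟩)
  have hc₂ : ContinuousOn (fun s => f₂ s (X₂ s)) (Ici (0:ℝ)) := by
    exact hf₂.comp ((continuous_id.prodMk hX₂).continuousOn)
      (fun s hs => ⟨hs, mem_univ _⟩)
  set g : ℝ → ℝ := fun s => f₂ s (X₂ s) - f₁ s (X₁ s) with hg_def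
  have hg : ContinuousOn g (Ici (0:ℝ)) := hc₂.sub hc₁
  have hsubI : ∀ a b : ℝ, 0 ≤ a → 0 ≤ b → uIcc a b ⊆ Ici (0:ℝ) := by
    intro a b ha hb x hx
    exact le_trans (le_min ha hb) hx.1
  have hint : ∀ a b : ℝ, 0 ≤ a → 0 ≤ b → IntervalIntegrable g volume a b := by
    intro a b ha hb
    exact (hg.mono (hsubI a b ha hb)).intervalIntegrable
  have hint₁ : ∀ a b : ℝ, 0 ≤ a → 0 ≤ b →
      IntervalIntegrable (fun s => f₁ s (X₁ s)) volume a b := by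
    intro a b ha hb
    exact (hc₁.mono (hsubI a b ha hb)).intervalIntegrable
  have hint₂ : ∀ a b : ℝ, 0 ≤ a → 0 ≤ b →
      IntervalIntegrable (fun s => f₂ s (X₂ s)) volume a b := by
    intro a b ha hb
    exact (hc₂.mono (hsubI a b ha hb)).intervalIntegrable
  -- the difference function and its integral representation
  set D : ℝ → ℝ := fun s => X₂ s - X₁ s with hD_def
  have hD : ∀ t, 0 ≤ t → D t = ∫ s in (0:ℝ)..t, g s := by
    intro t ht
    have := intervalIntegral.integral_sub (hint₂ 0 t le_rfl ht) (hint₁ 0 t le_rfl ht)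
    simp only [hD_def, h₁ t ht, h₂ t ht, hg_def]
    rw [this]
    ring
  have hX₁0 : X₁ 0 = X₀ := by simpa using h₁ 0 le_rfl
  have hX₂0 : X₂ 0 = X₀ := by simpa using h₂ 0 le_rfl
  have hg0 : 0 < g 0 := by
    simp only [hg_def, hX₁0, hX₂0]
    exact sub_pos.mpr (hlt 0 X₀ le_rfl)
  -- g > 0 on a right neighborhood of 0
  have hmem : {s | 0 < g s} ∈ nhdsWithin (0:ℝ) (Ici 0) := by
    have := hg 0 Set.self_mem_Ici (Ioi_mem_nhds hg0)
    simpa [Set.preimage, Set.mem_Ioi] using this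
  obtain ⟨ε, hε, hsub⟩ := mem_nhdsGE_iff_exists_Icc_subset.mp hmem
  -- D > 0 on (0, ε]
  have hDc : Continuous D := hX₂.sub hX₁
  have hpos : ∀ s, 0 < s → s ≤ ε → 0 < D s := by
    intro s hs hsε
    rw [hD s hs.le]
    refine intervalIntegral.intervalIntegral_pos_of_pos_on (hint 0 s le_rfl hs.le) ?_ hs
    intro x hx
    exact hsub ⟨hx.1.le, hx.2.le.trans hsε⟩
  -- main claim
  have main : ∀ t, 0 < t → 0 < D t := by
    by_contra hcon
    push_neg at hcon
    obtain ⟨t, ht, hle⟩ := hcon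
    have hεt : ε < t := by
      by_contra h
      push_neg at h
      exact absurd hle (not_le.mpr (hpos t ht h))
    set A : Set ℝ := {s | s ∈ Icc ε t ∧ D s ≤ 0} with hA_def
    have hAne : A.Nonempty := ⟨t, ⟨hεt.le, le_rfl⟩, hle⟩
    have hAbdd : BddBelow A := ⟨ε, fun x hx => hx.1.1⟩
    have hAclosed : IsClosed A := by
      have : A = Icc ε t ∩ D ⁻¹' Iic 0 := by
        ext x; simp [hA_def, Set.mem_Iic]
      rw [this]
      exact isClosed_Icc.inter (isClosed_Iic.preimage hDc)
    set τ := sInf A with hτ_def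
    have hτA : τ ∈ A := hAclosed.csInf_mem hAne hAbdd
    have hτε : ε < τ := lt_of_le_of_ne hτA.1.1 (by
      intro h
      exact absurd hτA.2 (not_le.mpr (by rw [← h]; exact hpos ε hε le_rfl)))
    have hτpos : 0 < τ := hε.trans hτε
    have hDpos_lt : ∀ s, 0 < s → s < τ → 0 < D s := by
      intro s hs hsτ
      rcases le_or_gt s ε with h | h
      · exact hpos s hs h
      · by_contra hc
        push_neg at hc
        have hsA : s ∈ A := ⟨⟨h.le, hsτ.le.trans hτA.1.2⟩, hc⟩
        exact absurd (csInf_le hAbdd hsA) (not_le.mpr hsτ)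
    have hDτ0 : D τ = 0 := by
      refine le_antisymm hτA.2 ?_
      have htend : Filter.Tendsto D (nhdsWithin τ (Iio τ)) (nhds (D τ)) :=
        (hDc.tendsto τ).mono_left nhdsWithin_le_nhds
      have hev : ∀ᶠ s in nhdsWithin τ (Iio τ), 0 ≤ D s := by
        filter_upwards [Ioo_mem_nhdsLT_of_mem (⟨hτpos, le_rfl⟩ : τ ∈ Ioc (0:ℝ) τ)]
          with s hs
        exact (hDpos_lt s hs.1 hs.2).le
      exact ge_of_tendsto htend hev
    have hXτ : X₂ τ = X₁ τ := by
      have := hDτ0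
      simp only [hD_def] at this
      linarith
    have hgτ : 0 < g τ := by
      simp only [hg_def, hXτ]
      exact sub_pos.mpr (hlt τ (X₁ τ) hτpos.le)
    -- g > 0 on a neighborhood of τ
    have hmemτ : {s | 0 < g s} ∈ nhds τ := by
      have h1 : ContinuousAt g τ := hg.continuousAt (Ici_mem_nhds hτpos)
      have := h1 (Ioi_mem_nhds hgτ)
      simpa [Set.preimage, Set.mem_Ioi] using this
    obtain ⟨δ, hδ, hball⟩ := Metric.mem_nhds_iff.mp hmemτ
    set δ' := min (δ/2) (τ - ε) with hδ'_def
    have hδ'pos : 0 < δ' := lt_min (by linarith) (by linarith)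
    have hδ'le : δ' ≤ δ/2 := min_le_left _ _
    have hδ'le2 : δ' ≤ τ - ε := min_le_right _ _
    have hτδε : ε ≤ τ - δ' := by linarith
    have hτδpos : 0 < τ - δ' := by linarith
    have hτδlt : τ - δ' < τ := by linarith
    have hIccball : Icc (τ - δ') τ ⊆ {s | 0 < g s} := by
      intro x hx
      apply hball
      rw [Metric.mem_ball, Real.dist_eq, abs_sub_lt_iff]
      constructor <;> [linarith [hx.2]; linarith [hx.1]]
    have hadd : (∫ s in (0:ℝ)..(τ - δ'), g s) + ∫ s in (τ - δ')..τ, g s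
        = ∫ s in (0:ℝ)..τ, g s :=
      intervalIntegral.integral_add_adjacent_intervals
        (hint 0 (τ - δ') le_rfl hτδpos.le) (hint (τ - δ') τ hτδpos.le hτpos.le)
    have hI1 : 0 < D (τ - δ') := hDpos_lt _ hτδpos hτδlt
    have hI2 : 0 ≤ ∫ s in (τ - δ')..τ, g s := by
      apply intervalIntegral.integral_nonneg hτδlt.le
      intro u hu
      exact (hIccball hu).le
    have : 0 < D τ := by
      rw [hD τ hτpos.le, ← hadd, ← hD (τ - δ') hτδpos.le]
      linarith
    rw [hDτ0] at this
    exact lt_irrefl 0 this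
  intro t ht
  have := main t ht
  simp only [hD_def] at this
  linarith
end

section
/- Let λ ∈ (0,1), γ > 0 with γλ + λ > 1, c > 0. Define β = (λ^{λ/(1−λ)} − λ^{1/(1−λ)}) / c^{λ/(1−λ)} and, for Λ̃ > 0, set ε = 1 / ((2β)^{(1−λ)/(γλ+λ−1)} Λ̃^{1/(γλ+λ−1)}). Then the function F_ε(x) = ε + (c/ε^γ) x − Λ̃ x^λ on [0,∞) attains its minimum at x* = (λ/c)^{1/(1−λ)} ε^{γ/(1−λ)} Λ̃^{1/(1−λ)}, and F_ε(x*) = ε − β ε^{γλ/(1−λ)} Λ̃^{1/(1−λ)} = ε/2. -/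
open Set Real

/-- Explicit computation: with ε = ((2β)^{(1−λ)} Λ̃)^{-1/(γλ+λ−1)}, the function
F_ε(x) = ε + (c/ε^γ)x − Λ̃ x^λ attains its minimum at x* and F_ε(x*) = ε/2. -/
theorem stmt3 (lam gam c Lam beta eps : ℝ)
    (hlam : lam ∈ Set.Ioo (0:ℝ) 1) (hgam : 0 < gam) (hcond : 1 < gam * lam + lam)
    (hc : 0 < c) (hLam : 0 < Lam)
    (hbeta : beta = (lam ^ (lam / (1 - lam)) - lam ^ (1 / (1 - lam))) / c ^ (lam / (1 - lam)))
    (heps : eps = 1 / ((2 * beta) ^ ((1 - lam) / (gam * lam + lam - 1)) *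
      Lam ^ (1 / (gam * lam + lam - 1))))
    (F : ℝ → ℝ)
    (hF : ∀ x, F x = eps + c / eps ^ gam * x - Lam * x ^ lam) :
    (∀ x, 0 ≤ x →
      F ((lam / c) ^ (1 / (1 - lam)) * eps ^ (gam / (1 - lam)) * Lam ^ (1 / (1 - lam))) ≤ F x) ∧
    F ((lam / c) ^ (1 / (1 - lam)) * eps ^ (gam / (1 - lam)) * Lam ^ (1 / (1 - lam)))
      = eps - beta * eps ^ (gam * lam / (1 - lam)) * Lam ^ (1 / (1 - lam)) ∧
    F ((lam / c) ^ (1 / (1 - lam)) * eps ^ (gam / (1 - lam)) * Lam ^ (1 / (1 - lam))) = eps / 2 := by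
  obtain ⟨hl0, hl1⟩ := hlam
  have h1l : 0 < 1 - lam := by linarith
  have hθ : 0 < gam * lam + lam - 1 := by linarith
  have hlc : 0 < lam / c := div_pos hl0 hc
  -- beta positive
  have hbpos : 0 < beta := by
    rw [hbeta]
    apply div_pos _ (Real.rpow_pos_of_pos hc _)
    have h := Real.rpow_lt_rpow_of_exponent_gt hl0 hl1
      (show lam / (1 - lam) < 1 / (1 - lam) by gcongr)
    linarith [h]
  have h2b : (0:ℝ) < 2 * beta := by linarith
  have heps0 : 0 < eps := by
    rw [heps]
    exact div_pos one_pos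
      (mul_pos (Real.rpow_pos_of_pos h2b _) (Real.rpow_pos_of_pos hLam _))
  set xs : ℝ := (lam / c) ^ (1 / (1 - lam)) * eps ^ (gam / (1 - lam)) * Lam ^ (1 / (1 - lam))
    with hxs_def
  have hxs : 0 < xs :=
    mul_pos (mul_pos (Real.rpow_pos_of_pos hlc _) (Real.rpow_pos_of_pos heps0 _))
      (Real.rpow_pos_of_pos hLam _)
  have hepsg : 0 < eps ^ gam := Real.rpow_pos_of_pos heps0 gam
  -- first-order condition
  have e1 : xs ^ (lam - 1) = (lam / c)⁻¹ * (eps ^ gam)⁻¹ * Lam⁻¹ := by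
    rw [hxs_def, Real.mul_rpow (by positivity) (by positivity),
      Real.mul_rpow (by positivity) (by positivity),
      ← Real.rpow_mul hlc.le, ← Real.rpow_mul heps0.le, ← Real.rpow_mul hLam.le,
      show 1 / (1 - lam) * (lam - 1) = -1 by field_simp; ring,
      show gam / (1 - lam) * (lam - 1) = -gam by field_simp; ring,
      Real.rpow_neg_one, Real.rpow_neg heps0.le, Real.rpow_neg_one]
  have key : c / eps ^ gam = Lam * lam * xs ^ (lam - 1) := by
    rw [e1]; field_simp
  have hx1 : xs ^ (lam - 1) * xs = xs ^ lam := by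
    rw [← Real.rpow_add_one hxs.ne']
    norm_num
  have hx2 : xs ^ (lam - 1) * xs ^ (1 - lam) = 1 := by
    rw [← Real.rpow_add hxs]
    norm_num
  have E : c / eps ^ gam * xs = Lam * lam * xs ^ lam := by
    rw [key, mul_assoc, hx1]
  refine ⟨?_, ?_, ?_⟩
  · intro x hx
    rw [hF, hF]
    have G := Real.geom_mean_le_arith_mean2_weighted hl0.le h1l.le hx hxs.le (by ring)
    have hpos : (0:ℝ) ≤ Lam * xs ^ (lam - 1) :=
      (mul_pos hLam (Real.rpow_pos_of_pos hxs _)).le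
    have h := mul_le_mul_of_nonneg_left G hpos
    have G' : Lam * x ^ lam ≤ c / eps ^ gam * x + (1 - lam) * (Lam * xs ^ lam) := by
      calc Lam * x ^ lam
          = Lam * xs ^ (lam - 1) * (x ^ lam * xs ^ (1 - lam)) := by
            rw [show Lam * xs ^ (lam - 1) * (x ^ lam * xs ^ (1 - lam))
              = Lam * x ^ lam * (xs ^ (lam - 1) * xs ^ (1 - lam)) by ring, hx2, mul_one]
        _ ≤ Lam * xs ^ (lam - 1) * (lam * x + (1 - lam) * xs) := h
        _ = Lam * lam * xs ^ (lam - 1) * x + (1 - lam) * (Lam * (xs ^ (lam - 1) * xs)) := by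
            ring
        _ = c / eps ^ gam * x + (1 - lam) * (Lam * xs ^ lam) := by rw [hx1, ← key]
    linarith
  · rw [hF]
    have hval : (1 - lam) * (Lam * xs ^ lam)
        = beta * eps ^ (gam * lam / (1 - lam)) * Lam ^ (1 / (1 - lam)) := by
      have hxl : xs ^ lam = (lam / c) ^ (lam / (1 - lam)) * eps ^ (gam * lam / (1 - lam)) *
          Lam ^ (lam / (1 - lam)) := by
        rw [hxs_def, Real.mul_rpow (by positivity) (by positivity),
          Real.mul_rpow (by positivity) (by positivity),
          ← Real.rpow_mul hlc.le, ← Real.rpow_mul heps0.le, ← Real.rpow_mul hLam.le,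
          show 1 / (1 - lam) * lam = lam / (1 - lam) by ring,
          show gam / (1 - lam) * lam = gam * lam / (1 - lam) by ring]
      have hLl : Lam * Lam ^ (lam / (1 - lam)) = Lam ^ (1 / (1 - lam)) := by
        rw [mul_comm, ← Real.rpow_add_one hLam.ne']
        congr 1
        field_simp; ring
      have hbval : (1 - lam) * (lam / c) ^ (lam / (1 - lam)) = beta := by
        rw [hbeta, Real.div_rpow hl0.le hc.le,
          show 1 / (1 - lam) = lam / (1 - lam) + 1 by field_simp; ring,
          Real.rpow_add hl0, Real.rpow_one]
        field_simp
      rw [hxl, ← hbval]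
      calc (1 - lam) * (Lam * ((lam / c) ^ (lam / (1 - lam)) * eps ^ (gam * lam / (1 - lam)) *
            Lam ^ (lam / (1 - lam))))
          = (1 - lam) * (lam / c) ^ (lam / (1 - lam)) * eps ^ (gam * lam / (1 - lam)) *
            (Lam * Lam ^ (lam / (1 - lam))) := by ring
        _ = _ := by rw [hLl]
    linarith [E, hval]
  · rw [hF]
    have hhalf : beta * eps ^ (gam * lam / (1 - lam)) * Lam ^ (1 / (1 - lam)) = eps / 2 := by
      have hepsθ : eps ^ ((gam * lam + lam - 1) / (1 - lam))
          = (2 * beta)⁻¹ * Lam ^ (-(1 / (1 - lam))) := by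
        rw [heps, one_div, mul_inv, ← Real.rpow_neg h2b.le, ← Real.rpow_neg hLam.le,
          Real.mul_rpow (by positivity) (by positivity),
          ← Real.rpow_mul h2b.le, ← Real.rpow_mul hLam.le,
          show -((1 - lam) / (gam * lam + lam - 1)) * ((gam * lam + lam - 1) / (1 - lam))
            = -1 by rw [neg_mul, div_mul_div_comm, mul_comm (1 - lam), div_self (mul_pos hθ h1l).ne'],
          show -(1 / (gam * lam + lam - 1)) * ((gam * lam + lam - 1) / (1 - lam))
            = -(1 / (1 - lam)) by rw [neg_mul, div_mul_div_comm, one_mul, ← div_div, div_self hθ.ne'],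
          Real.rpow_neg_one]
      have hsplit : eps ^ (gam * lam / (1 - lam))
          = eps ^ ((gam * lam + lam - 1) / (1 - lam)) * eps := by
        rw [show gam * lam / (1 - lam) = (gam * lam + lam - 1) / (1 - lam) + 1 by
          field_simp; ring, Real.rpow_add_one heps0.ne']
      rw [hsplit, hepsθ]
      have hLcancel : Lam ^ (-(1 / (1 - lam))) * Lam ^ (1 / (1 - lam)) = 1 := by
        rw [← Real.rpow_add hLam]; norm_num
      calc beta * ((2 * beta)⁻¹ * Lam ^ (-(1 / (1 - lam))) * eps) * Lam ^ (1 / (1 - lam))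
          = beta * (2 * beta)⁻¹ * eps * (Lam ^ (-(1 / (1 - lam))) * Lam ^ (1 / (1 - lam))) := by
            ring
        _ = eps / 2 := by rw [hLcancel]; field_simp
    have hval2 : eps + c / eps ^ gam * xs - Lam * xs ^ lam
        = eps - beta * eps ^ (gam * lam / (1 - lam)) * Lam ^ (1 / (1 - lam)) := by
      have hval : (1 - lam) * (Lam * xs ^ lam)
          = beta * eps ^ (gam * lam / (1 - lam)) * Lam ^ (1 / (1 - lam)) := by
        have hxl : xs ^ lam = (lam / c) ^ (lam / (1 - lam)) * eps ^ (gam * lam / (1 - lam)) *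
            Lam ^ (lam / (1 - lam)) := by
          rw [hxs_def, Real.mul_rpow (by positivity) (by positivity),
            Real.mul_rpow (by positivity) (by positivity),
            ← Real.rpow_mul hlc.le, ← Real.rpow_mul heps0.le, ← Real.rpow_mul hLam.le,
            show 1 / (1 - lam) * lam = lam / (1 - lam) by ring,
            show gam / (1 - lam) * lam = gam * lam / (1 - lam) by ring]
        have hLl : Lam * Lam ^ (lam / (1 - lam)) = Lam ^ (1 / (1 - lam)) := by
          rw [mul_comm, ← Real.rpow_add_one hLam.ne']
          congr 1
          field_simp; ring
        have hbval : (1 - lam) * (lam / c) ^ (lam / (1 - lam)) = beta := by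
          rw [hbeta, Real.div_rpow hl0.le hc.le,
            show 1 / (1 - lam) = lam / (1 - lam) + 1 by field_simp; ring,
            Real.rpow_add hl0, Real.rpow_one]
          field_simp
        rw [hxl, ← hbval]
        calc (1 - lam) * (Lam * ((lam / c) ^ (lam / (1 - lam)) * eps ^ (gam * lam / (1 - lam)) *
              Lam ^ (lam / (1 - lam))))
            = (1 - lam) * (lam / c) ^ (lam / (1 - lam)) * eps ^ (gam * lam / (1 - lam)) *
              (Lam * Lam ^ (lam / (1 - lam))) := by ring
          _ = _ := by rw [hLl]
      linarith [E, hval]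
    rw [hval2, hhalf]
    ring
end

section
/- Let α ∈ [1/2, 1), κ, θ > 0, and let Y : [0,T] → (0,∞) be λ-Hölder continuous with λ > 1/2 and satisfy Y(t) = Y(0) + ∫₀ᵗ (κ Y(s)^{−α/(1−α)} − θ Y(s)) ds + Z(t), where Z is λ-Hölder continuous. Then X(t) := Y(t)^{1/(1−α)} satisfies, pathwise, X(t) = X(0) + ∫₀ᵗ (κ/(1−α) − (θ/(1−α)) X(s)) ds + (1/(1−α)) ∫₀ᵗ X(s)^α dZ(s), where the last integral is the pathwise Young (Riemann–Stieltjes) integral. -/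
open Set Real Filter MeasureTheory

lemma lip_rpow (p m M : ℝ) (hm : 0 < m) (hp1 : 1 ≤ p) :
    ∀ x ∈ Icc m M, ∀ y ∈ Icc m M, |y ^ p - x ^ p| ≤ p * M ^ (p - 1) * |y - x| := by
  intro x hx y hy
  have hder : ∀ ξ ∈ Icc m M, HasDerivWithinAt (fun z : ℝ => z ^ p) (p * ξ ^ (p-1)) (Icc m M) ξ :=
    fun ξ hξ => (Real.hasDerivAt_rpow_const (Or.inl (hm.trans_le hξ.1).ne')).hasDerivWithinAt
  have hbound : ∀ ξ ∈ Icc m M, ‖p * ξ ^ (p-1)‖ ≤ p * M ^ (p-1) := by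
    intro ξ hξ
    have h1 : (0:ℝ) ≤ ξ ^ (p-1) := Real.rpow_nonneg (hm.le.trans hξ.1) _
    have h2 : ξ ^ (p-1) ≤ M ^ (p-1) :=
      Real.rpow_le_rpow (hm.le.trans hξ.1) hξ.2 (by linarith)
    rw [Real.norm_eq_abs, abs_of_nonneg (mul_nonneg (by linarith) h1)]
    exact mul_le_mul_of_nonneg_left h2 (by linarith)
  have := (convex_Icc m M).norm_image_sub_le_of_norm_hasDerivWithin_le hder hbound hx hy
  simpa [Real.norm_eq_abs] using this

lemma taylor_rpow (p m M : ℝ) (hm : 0 < m) (hp : 2 ≤ p) :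
    ∀ x ∈ Icc m M, ∀ y ∈ Icc m M,
    |y ^ p - x ^ p - p * x ^ (p-1) * (y - x)| ≤ p * ((p-1) * M ^ (p-2)) * (y - x)^2 := by
  intro x hx y hy
  set s : Set ℝ := Icc (min x y) (max x y) with hs
  have hsub : s ⊆ Icc m M := Icc_subset_Icc (le_min hx.1 hy.1) (max_le hx.2 hy.2)
  have hder : ∀ ξ ∈ s, HasDerivWithinAt (fun z : ℝ => z ^ p - p * x ^ (p-1) * z)
      (p * ξ ^ (p-1) - p * x ^ (p-1)) s ξ := by
    intro ξ hξ
    have h1 : HasDerivAt (fun z : ℝ => z ^ p) (p * ξ ^ (p-1)) ξ :=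
      Real.hasDerivAt_rpow_const (Or.inl (hm.trans_le (hsub hξ).1).ne')
    have h2 : HasDerivAt (fun z : ℝ => p * x ^ (p-1) * z) (p * x ^ (p-1)) ξ := by
      simpa using (hasDerivAt_id ξ).const_mul (p * x ^ (p-1))
    exact (h1.sub h2).hasDerivWithinAt
  have hbound : ∀ ξ ∈ s, ‖p * ξ ^ (p-1) - p * x ^ (p-1)‖ ≤
      p * ((p-1) * M ^ (p-2)) * |y - x| := by
    intro ξ hξ
    have hlip := lip_rpow (p-1) m M hm (by linarith) x hx ξ (hsub hξ)
    have hdist : |ξ - x| ≤ |y - x| := by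
      have h1 := hξ.1; have h2 := hξ.2
      have hx1 : min x y ≤ x := min_le_left x y
      have hx2 : x ≤ max x y := le_max_left x y
      have habs : |y - x| = max x y - min x y := (max_sub_min_eq_abs x y).symm
      rw [abs_sub_le_iff]
      constructor <;> rw [habs] <;> linarith
    calc ‖p * ξ ^ (p-1) - p * x ^ (p-1)‖ = p * |ξ ^ (p-1) - x ^ (p-1)| := by
          rw [Real.norm_eq_abs, ← mul_sub, abs_mul, abs_of_nonneg (by linarith : (0:ℝ) ≤ p)]
      _ ≤ p * ((p-1) * M ^ ((p-1)-1) * |ξ - x|) :=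
          mul_le_mul_of_nonneg_left hlip (by linarith)
      _ ≤ p * ((p-1) * M ^ (p-2) * |y - x|) := by
          have : (p-1)-1 = p-2 := by ring
          rw [this]
          refine mul_le_mul_of_nonneg_left ?_ (by linarith)
          refine mul_le_mul_of_nonneg_left hdist ?_
          have hM : (0:ℝ) ≤ M ^ (p-2) := Real.rpow_nonneg (hm.le.trans (hx.1.trans hx.2)) _
          exact mul_nonneg (by linarith) hM
      _ = p * ((p-1) * M ^ (p-2)) * |y - x| := by ring
  have hconv : Convex ℝ s := convex_Icc _ _
  have hxs : x ∈ s := ⟨min_le_left _ _, le_max_left _ _⟩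
  have hys : y ∈ s := ⟨min_le_right _ _, le_max_right _ _⟩
  have := hconv.norm_image_sub_le_of_norm_hasDerivWithin_le hder hbound hxs hys
  rw [Real.norm_eq_abs, Real.norm_eq_abs] at this
  calc |y ^ p - x ^ p - p * x ^ (p-1) * (y - x)|
      = |(y ^ p - p * x ^ (p-1) * y) - (x ^ p - p * x ^ (p-1) * x)| := by ring_nf
    _ ≤ p * ((p-1) * M ^ (p-2)) * |y - x| * |y - x| := this
    _ = p * ((p-1) * M ^ (p-2)) * (y - x)^2 := by
        rw [mul_assoc, ← abs_mul]
        rw [abs_of_nonneg (mul_self_nonneg _)]; ring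

set_option maxHeartbeats 2000000 in
/-- Chain rule for X = Y^{1/(1−α)}: X satisfies the generalized CIR/CEV equation,
where the Young integral ∫₀ᵗ X^α dZ is realized as the limit of Riemann–Stieltjes sums. -/
theorem stmt14 (T alpha kappa theta lam LamY LamZ : ℝ) (hT : 0 < T)
    (halpha : alpha ∈ Set.Ico (1/2 : ℝ) 1) (hkappa : 0 < kappa) (htheta : 0 < theta)
    (hlam : 1/2 < lam) (hlam1 : lam < 1)
    (Y Z X : ℝ → ℝ)
    (hYpos : ∀ t ∈ Set.Icc 0 T, 0 < Y t)
    (hYH : ∀ s ∈ Set.Icc 0 T, ∀ t ∈ Set.Icc 0 T, |Y t - Y s| ≤ LamY * |t - s| ^ lam)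
    (hZH : ∀ s ∈ Set.Icc 0 T, ∀ t ∈ Set.Icc 0 T, |Z t - Z s| ≤ LamZ * |t - s| ^ lam)
    (heq : ∀ t ∈ Set.Icc 0 T, Y t = Y 0 +
      (∫ s in (0:ℝ)..t, (kappa * Y s ^ (-(alpha / (1 - alpha))) - theta * Y s)) + Z t)
    (hX : ∀ t, X t = Y t ^ (1 / (1 - alpha))) :
    ∀ t ∈ Set.Icc 0 T, ∃ J : ℝ,
      Tendsto (fun N : ℕ => ∑ k ∈ Finset.range N,
        X ((k : ℝ) * t / (N : ℝ)) ^ alpha *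
          (Z (((k : ℝ) + 1) * t / (N : ℝ)) - Z ((k : ℝ) * t / (N : ℝ))))
        atTop (nhds J) ∧
      X t = X 0 + (∫ s in (0:ℝ)..t, (kappa / (1 - alpha) - theta / (1 - alpha) * X s)) +
        1 / (1 - alpha) * J := by
  obtain ⟨ha12, ha1⟩ := halpha
  have h1a : 0 < 1 - alpha := by linarith
  set p : ℝ := 1 / (1 - alpha) with hpdef
  have hppos : 0 < p := by positivity
  have hp2 : 2 ≤ p := by rw [hpdef, le_div_iff₀ h1a]; linarith
  have hbeta : alpha / (1 - alpha) = p - 1 := by rw [hpdef]; field_simp; ring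
  have hlam0 : 0 < lam := by linarith
  have hLamY : 0 ≤ LamY := by
    have h := hYH 0 ⟨le_refl 0, hT.le⟩ T ⟨hT.le, le_refl T⟩
    have hTl : (0:ℝ) < |T - 0| ^ lam := by
      apply Real.rpow_pos_of_pos; rw [sub_zero, abs_of_pos hT]; exact hT
    nlinarith [abs_nonneg (Y T - Y 0)]
  -- continuity of Y
  have hYc : ContinuousOn Y (Icc 0 T) := by
    intro s hs
    have h0 : Tendsto (fun u : ℝ => LamY * |u - s| ^ lam) (nhdsWithin s (Icc 0 T)) (nhds 0) := by
      have h1 : Tendsto (fun u : ℝ => |u - s|) (nhdsWithin s (Icc 0 T)) (nhds 0) := by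
        have h1' : Tendsto (fun u : ℝ => |u - s|) (nhds s) (nhds |s - s|) :=
          ((continuous_id.sub continuous_const).abs).tendsto s
        simpa using h1'.mono_left nhdsWithin_le_nhds
      have h2 : ContinuousAt (fun x : ℝ => x ^ lam) 0 :=
        Real.continuousAt_rpow_const 0 lam (Or.inr hlam0.le)
      have h3 := h2.tendsto.comp h1
      rw [Real.zero_rpow hlam0.ne'] at h3
      simpa using h3.const_mul LamY
    have h4 : Tendsto (fun u => |Y u - Y s|) (nhdsWithin s (Icc 0 T)) (nhds 0) :=
      squeeze_zero' (Eventually.of_forall fun u => abs_nonneg _)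
        (eventually_mem_nhdsWithin.mono fun u hu => hYH s hs u hu) h0
    have h5 : ContinuousWithinAt Y (Icc 0 T) s := by
      unfold ContinuousWithinAt
      rw [tendsto_iff_norm_sub_tendsto_zero]
      simpa [Real.norm_eq_abs] using h4
    exact h5
  obtain ⟨sm, hsm, hsmin⟩ := isCompact_Icc.exists_isMinOn (nonempty_Icc.mpr hT.le) hYc
  obtain ⟨sM, hsM, hsmax⟩ := isCompact_Icc.exists_isMaxOn (nonempty_Icc.mpr hT.le) hYc
  set m : ℝ := Y sm with hmdef
  set M : ℝ := Y sM with hMdef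
  have hm : 0 < m := hYpos sm hsm
  have hMpos : 0 < M := hYpos sM hsM
  have hmem : ∀ s ∈ Icc (0:ℝ) T, Y s ∈ Icc m M := fun s hs =>
    ⟨(isMinOn_iff.mp hsmin) s hs, (isMaxOn_iff.mp hsmax) s hs⟩
  have hMp2 : (0:ℝ) ≤ M ^ (p-2) := Real.rpow_nonneg hMpos.le _
  set F : ℝ → ℝ := fun s => kappa * Y s ^ (-(alpha / (1 - alpha))) - theta * Y s with hFdef
  have hFc : ContinuousOn F (Icc 0 T) :=
    (continuousOn_const.mul (hYc.rpow_const fun s hs => Or.inl (hYpos s hs).ne')).sub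
      (continuousOn_const.mul hYc)
  set Fb : ℝ := kappa * m ^ (-(alpha / (1 - alpha))) + theta * M with hFbdef
  have hFbnn : 0 ≤ Fb :=
    add_nonneg (mul_nonneg hkappa.le (Real.rpow_nonneg hm.le _)) (mul_nonneg htheta.le hMpos.le)
  have hFb : ∀ s ∈ Icc (0:ℝ) T, |F s| ≤ Fb := by
    intro s hs
    have h1 : (0:ℝ) < Y s := hYpos s hs
    have h2 : Y s ^ (-(alpha/(1-alpha))) ≤ m ^ (-(alpha/(1-alpha))) :=
      Real.rpow_le_rpow_of_nonpos hm (hmem s hs).1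
        (neg_nonpos.mpr (div_nonneg (by linarith) h1a.le))
    have h3 : (0:ℝ) ≤ Y s ^ (-(alpha/(1-alpha))) := Real.rpow_nonneg h1.le _
    have h4 : Y s ≤ M := (hmem s hs).2
    calc |F s| ≤ |kappa * Y s ^ (-(alpha/(1-alpha)))| + |theta * Y s| := abs_sub _ _
      _ = kappa * Y s ^ (-(alpha/(1-alpha))) + theta * Y s := by
          rw [abs_of_nonneg (mul_nonneg hkappa.le h3), abs_of_nonneg (mul_nonneg htheta.le h1.le)]
      _ ≤ Fb := by
          rw [hFbdef]
          exact add_le_add (mul_le_mul_of_nonneg_left h2 hkappa.le)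
            (mul_le_mul_of_nonneg_left h4 htheta.le)
  have hFint : ∀ a ∈ Icc (0:ℝ) T, ∀ b ∈ Icc (0:ℝ) T, IntervalIntegrable F volume a b :=
    fun a ha b hb => (hFc.mono (uIcc_subset_Icc ha hb)).intervalIntegrable
  have hZdiff : ∀ a ∈ Icc (0:ℝ) T, ∀ b ∈ Icc (0:ℝ) T,
      Z b - Z a = (Y b - Y a) - ∫ s in a..b, F s := by
    intro a ha b hb
    have h0T : (0:ℝ) ∈ Icc (0:ℝ) T := ⟨le_refl 0, hT.le⟩
    have h1 := heq a ha
    have h2 := heq b hb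
    have h3 := intervalIntegral.integral_add_adjacent_intervals (hFint 0 h0T a ha) (hFint a ha b hb)
    linarith
  have hXeq : ∀ s, X s = Y s ^ p := hX
  have hXpos : ∀ s ∈ Icc (0:ℝ) T, 0 < X s := fun s hs => by
    rw [hXeq s]; exact Real.rpow_pos_of_pos (hYpos s hs) p
  have hXa : ∀ s ∈ Icc (0:ℝ) T, X s ^ alpha = Y s ^ (p - 1) := by
    intro s hs
    rw [hXeq s, ← Real.rpow_mul (hYpos s hs).le]
    congr 1
    rw [hpdef]; field_simp; ring
  have hkeyI : ∀ s ∈ Icc (0:ℝ) T, X s ^ alpha * F s = kappa - theta * X s := by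
    intro s hs
    have hy := hYpos s hs
    rw [hXa s hs]
    simp only [hFdef]
    rw [hbeta]
    have e1 : Y s ^ (p-1) * Y s ^ (-(p-1)) = 1 := by
      rw [← Real.rpow_add hy]; simp
    have e2 : Y s ^ (p-1) * Y s = Y s ^ p := by
      have h := Real.rpow_add_one hy.ne' (p-1)
      rw [show p-1+1 = p by ring] at h
      exact h.symm
    calc Y s ^ (p-1) * (kappa * Y s ^ (-(p-1)) - theta * Y s)
        = kappa * (Y s ^ (p-1) * Y s ^ (-(p-1))) - theta * (Y s ^ (p-1) * Y s) := by ring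
      _ = kappa - theta * X s := by rw [e1, e2, hXeq s]; ring
  have hXc : ContinuousOn X (Icc (0:ℝ) T) :=
    (hYc.rpow_const fun s hs => Or.inl (hYpos s hs).ne').congr fun s hs => hXeq s
  have hXAc : ContinuousOn (fun s => X s ^ alpha) (Icc (0:ℝ) T) :=
    hXc.rpow_const fun s hs => Or.inr (by linarith)
  have hGc : ContinuousOn (fun s => kappa - theta * X s) (Icc (0:ℝ) T) :=
    continuousOn_const.sub (continuousOn_const.mul hXc)
  have hGint : ∀ a ∈ Icc (0:ℝ) T, ∀ b ∈ Icc (0:ℝ) T,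
      IntervalIntegrable (fun s => kappa - theta * X s) volume a b :=
    fun a ha b hb => (hGc.mono (uIcc_subset_Icc ha hb)).intervalIntegrable
  intro t ht
  rcases eq_or_lt_of_le ht.1 with h0 | h0
  · -- t = 0
    refine ⟨0, ?_, ?_⟩
    · have hz : ∀ N : ℕ, (∑ k ∈ Finset.range N,
          X ((k:ℝ)*t/(N:ℝ))^alpha * (Z (((k:ℝ)+1)*t/(N:ℝ)) - Z ((k:ℝ)*t/(N:ℝ)))) = 0 := by
        intro N
        apply Finset.sum_eq_zero
        intro k hk
        rw [← h0]
        simp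
      exact (tendsto_const_nhds).congr fun N => (hz N).symm
    · rw [← h0]
      simp
  · -- 0 < t
    have ht2 : t ≤ T := ht.2
    set c1 : ℝ := (p-1) * M ^ (p-2) * LamY^2 with hc1
    set c2 : ℝ := (p-1) * M ^ (p-2) * LamY * Fb with hc2
    have hc1nn : 0 ≤ c1 := by
      apply mul_nonneg (mul_nonneg (by linarith) hMp2) (sq_nonneg _)
    have hc2nn : 0 ≤ c2 :=
      mul_nonneg (mul_nonneg (mul_nonneg (by linarith) hMp2) hLamY) hFbnn
    refine ⟨(1-alpha)*(X t - X 0) - ∫ s in (0:ℝ)..t, (kappa - theta * X s), ?_, ?_⟩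
    · -- the limit
      rw [tendsto_iff_norm_sub_tendsto_zero]
      have key : ∀ N : ℕ, 1 ≤ N →
          ‖(∑ k ∈ Finset.range N, X ((k:ℝ)*t/(N:ℝ))^alpha *
              (Z (((k:ℝ)+1)*t/(N:ℝ)) - Z ((k:ℝ)*t/(N:ℝ)))) -
            ((1-alpha)*(X t - X 0) - ∫ s in (0:ℝ)..t, (kappa - theta * X s))‖ ≤
          (N:ℝ) * (c1 * ((t/(N:ℝ))^lam)^2 + c2 * (t/(N:ℝ))^lam * (t/(N:ℝ))) := by
        intro N hN
        have hNpos : (0:ℝ) < (N:ℝ) := by exact_mod_cast hN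
        have hNne : (N:ℝ) ≠ 0 := hNpos.ne'
        have hdpos : 0 < t/(N:ℝ) := div_pos h0 hNpos
        have hdl : (0:ℝ) ≤ (t/(N:ℝ))^lam := Real.rpow_nonneg hdpos.le _
        set u : ℕ → ℝ := fun k => (k:ℝ) * t / (N:ℝ) with hu
        have hueq : ∀ k : ℕ, u k = (k:ℝ) * t / (N:ℝ) := fun k => rfl
        have humem : ∀ k : ℕ, k ≤ N → u k ∈ Icc (0:ℝ) T := by
          intro k hk
          rw [hueq]
          constructor
          · positivity
          · have hkN : (k:ℝ) ≤ (N:ℝ) := by exact_mod_cast hk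
            have h5 : (k:ℝ) * t / (N:ℝ) ≤ t := by
              rw [div_le_iff₀ hNpos]; nlinarith
            linarith
        have hstep : ∀ k : ℕ, u (k+1) - u k = t/(N:ℝ) := by
          intro k
          rw [hueq, hueq]
          push_cast
          field_simp
          ring
        have humono : ∀ k : ℕ, u k ≤ u (k+1) := by
          intro k; have := hstep k; linarith [hdpos]
        have hu0 : u 0 = 0 := by rw [hueq]; simp
        have huN : u N = t := by rw [hueq]; field_simp
        have hdY : ∀ k : ℕ, k < N → |Y (u (k+1)) - Y (u k)| ≤ LamY * (t/(N:ℝ))^lam := by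
          intro k hk
          have h := hYH (u k) (humem k hk.le) (u (k+1)) (humem (k+1) hk)
          rwa [hstep k, abs_of_pos hdpos] at h
        have hsum0 : (∑ k ∈ Finset.range N, X ((k:ℝ)*t/(N:ℝ))^alpha *
            (Z (((k:ℝ)+1)*t/(N:ℝ)) - Z ((k:ℝ)*t/(N:ℝ)))) =
            ∑ k ∈ Finset.range N, (X (u k)^alpha * (Y (u (k+1)) - Y (u k)) -
              X (u k)^alpha * ∫ s in u k..u (k+1), F s) := by
          apply Finset.sum_congr rfl
          intro k hk
          have hk' := Finset.mem_range.mp hk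
          have e1 : ((k:ℝ)+1)*t/(N:ℝ) = u (k+1) := by rw [hueq]; push_cast; ring
          have e2 : (k:ℝ)*t/(N:ℝ) = u k := (hueq k).symm
          rw [e1, e2, hZdiff (u k) (humem k hk'.le) (u (k+1)) (humem (k+1) hk')]
          ring
        have htel : (1-alpha) * (X t - X 0) =
            ∑ k ∈ Finset.range N, (1-alpha) * (X (u (k+1)) - X (u k)) := by
          rw [← Finset.mul_sum, Finset.sum_range_sub (fun k => X (u k)), hu0, huN]
        have hintsum : (∫ s in (0:ℝ)..t, (kappa - theta * X s)) =
            ∑ k ∈ Finset.range N, ∫ s in u k..u (k+1), (kappa - theta * X s) := by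
          have h := intervalIntegral.sum_integral_adjacent_intervals
            (a := u) (μ := volume) (f := fun s => kappa - theta * X s)
            (fun k hk => hGint (u k) (humem k hk.le) (u (k+1)) (humem (k+1) hk))
          rw [hu0, huN] at h
          exact h.symm
        rw [hsum0, htel, hintsum, ← Finset.sum_sub_distrib, ← Finset.sum_sub_distrib]
        have hterm : ∀ k ∈ Finset.range N,
            ‖(X (u k)^alpha * (Y (u (k+1)) - Y (u k)) -
                X (u k)^alpha * ∫ s in u k..u (k+1), F s) -
              ((1-alpha) * (X (u (k+1)) - X (u k)) -
                ∫ s in u k..u (k+1), (kappa - theta * X s))‖ ≤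
            c1 * ((t/(N:ℝ))^lam)^2 + c2 * (t/(N:ℝ))^lam * (t/(N:ℝ)) := by
          intro k hk
          have hk' := Finset.mem_range.mp hk
          have memk := humem k hk'.le
          have memk1 := humem (k+1) hk'
          have hrw : (X (u k)^alpha * (Y (u (k+1)) - Y (u k)) -
                X (u k)^alpha * ∫ s in u k..u (k+1), F s) -
              ((1-alpha) * (X (u (k+1)) - X (u k)) -
                ∫ s in u k..u (k+1), (kappa - theta * X s)) =
              (X (u k)^alpha * (Y (u (k+1)) - Y (u k)) -
                (1-alpha) * (X (u (k+1)) - X (u k))) -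
              (X (u k)^alpha * (∫ s in u k..u (k+1), F s) -
                ∫ s in u k..u (k+1), (kappa - theta * X s)) := by ring
          rw [Real.norm_eq_abs, hrw]
          refine (abs_sub _ _).trans (add_le_add ?_ ?_)
          · -- Taylor term
            rw [hXa _ memk, hXeq (u (k+1)), hXeq (u k)]
            have htay := taylor_rpow p m M hm hp2 (Y (u k)) (hmem _ memk)
              (Y (u (k+1))) (hmem _ memk1)
            have h1ap : 1 - alpha = 1/p := by rw [hpdef, one_div_one_div]
            have hiden : Y (u k)^(p-1) * (Y (u (k+1)) - Y (u k)) -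
                (1-alpha) * (Y (u (k+1))^p - Y (u k)^p) =
                -(1/p) * (Y (u (k+1))^p - Y (u k)^p -
                  p * Y (u k)^(p-1) * (Y (u (k+1)) - Y (u k))) := by
              rw [h1ap]
              field_simp
              ring
            rw [hiden, abs_mul, abs_neg, abs_of_nonneg (by positivity : (0:ℝ) ≤ 1/p)]
            have hsq : (Y (u (k+1)) - Y (u k))^2 ≤ (LamY * (t/(N:ℝ))^lam)^2 := by
              rw [← sq_abs]
              exact pow_le_pow_left₀ (abs_nonneg _) (hdY k hk') 2
            calc 1/p * |Y (u (k+1))^p - Y (u k)^p - p * Y (u k)^(p-1) * (Y (u (k+1)) - Y (u k))|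
                ≤ 1/p * (p * ((p-1) * M^(p-2)) * (Y (u (k+1)) - Y (u k))^2) :=
                  mul_le_mul_of_nonneg_left htay (by positivity)
              _ ≤ 1/p * (p * ((p-1) * M^(p-2)) * (LamY * (t/(N:ℝ))^lam)^2) := by
                  refine mul_le_mul_of_nonneg_left ?_ (by positivity : (0:ℝ) ≤ 1/p)
                  exact mul_le_mul_of_nonneg_left hsq
                    (mul_nonneg hppos.le (mul_nonneg (by linarith) hMp2))
              _ = c1 * ((t/(N:ℝ))^lam)^2 := by
                  rw [hc1]; field_simp
          · -- integral term
            have humono' := humono k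
            have hsub : Set.uIcc (u k) (u (k+1)) ⊆ Icc (0:ℝ) T := uIcc_subset_Icc memk memk1
            have hFi : IntervalIntegrable F volume (u k) (u (k+1)) := hFint _ memk _ memk1
            have hint1 : IntervalIntegrable (fun s => X (u k)^alpha * F s) volume
                (u k) (u (k+1)) := hFi.const_mul _
            have hint2 : IntervalIntegrable (fun s => X s^alpha * F s) volume
                (u k) (u (k+1)) :=
              ((hXAc.mono hsub).mul (hFc.mono hsub)).intervalIntegrable
            have e3 : X (u k)^alpha * (∫ s in u k..u (k+1), F s) =
                ∫ s in u k..u (k+1), X (u k)^alpha * F s :=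
              (intervalIntegral.integral_const_mul _ _).symm
            have e4 : (∫ s in u k..u (k+1), (kappa - theta * X s)) =
                ∫ s in u k..u (k+1), X s^alpha * F s :=
              intervalIntegral.integral_congr (fun s hs => (hkeyI s (hsub hs)).symm)
            rw [e3, e4, ← intervalIntegral.integral_sub hint1 hint2]
            have hbd : ∀ s ∈ Set.uIoc (u k) (u (k+1)),
                ‖X (u k)^alpha * F s - X s^alpha * F s‖ ≤
                (p-1) * M^(p-2) * LamY * (t/(N:ℝ))^lam * Fb := by
              intro s hs
              have hsmem : s ∈ Icc (0:ℝ) T := hsub (Set.uIoc_subset_uIcc hs)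
              have hsk : |u k - s| ≤ t/(N:ℝ) := by
                rw [Set.uIoc_of_le humono'] at hs
                have h6 := hstep k
                rw [abs_sub_comm, abs_of_pos (by linarith [hs.1] : 0 < s - u k)]
                linarith [hs.2]
              have hXs : |X (u k)^alpha - X s^alpha| ≤
                  (p-1)*M^(p-2)*LamY*(t/(N:ℝ))^lam := by
                rw [hXa _ memk, hXa _ hsmem]
                have hlip := lip_rpow (p-1) m M hm (by linarith) (Y s) (hmem _ hsmem)
                  (Y (u k)) (hmem _ memk)
                have hYd : |Y (u k) - Y s| ≤ LamY * (t/(N:ℝ))^lam := by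
                  have h8 := hYH s hsmem (u k) memk
                  have h7 : |u k - s| ^ lam ≤ (t/(N:ℝ))^lam :=
                    Real.rpow_le_rpow (abs_nonneg _) hsk hlam0.le
                  calc |Y (u k) - Y s| ≤ LamY * |u k - s|^lam := h8
                    _ ≤ LamY * (t/(N:ℝ))^lam := mul_le_mul_of_nonneg_left h7 hLamY
                calc |Y (u k)^(p-1) - Y s^(p-1)|
                    ≤ (p-1)*M^((p-1)-1)*|Y (u k) - Y s| := hlip
                  _ ≤ (p-1)*M^(p-2)*(LamY*(t/(N:ℝ))^lam) := by
                      rw [show (p:ℝ)-1-1 = p-2 by ring]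
                      exact mul_le_mul_of_nonneg_left hYd (mul_nonneg (by linarith) hMp2)
                  _ = (p-1)*M^(p-2)*LamY*(t/(N:ℝ))^lam := by ring
              have hfs : X (u k)^alpha * F s - X s^alpha * F s =
                  (X (u k)^alpha - X s^alpha) * F s := by ring
              rw [Real.norm_eq_abs, hfs, abs_mul]
              exact mul_le_mul hXs (hFb s hsmem) (abs_nonneg _)
                (mul_nonneg (mul_nonneg (mul_nonneg (by linarith) hMp2) hLamY) hdl)
            have hb := intervalIntegral.norm_integral_le_of_norm_le_const hbd
            have h9 : |u (k+1) - u k| = t/(N:ℝ) := by rw [hstep k]; exact abs_of_pos hdpos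
            rw [h9, Real.norm_eq_abs] at hb
            calc |∫ s in u k..u (k+1), (X (u k)^alpha * F s - X s^alpha * F s)|
                ≤ (p-1)*M^(p-2)*LamY*(t/(N:ℝ))^lam*Fb * (t/(N:ℝ)) := hb
              _ = c2 * (t/(N:ℝ))^lam * (t/(N:ℝ)) := by rw [hc2]; ring
        refine le_trans (norm_sum_le _ _) ?_
        refine le_trans (Finset.sum_le_card_nsmul _ _ _ hterm) ?_
        rw [Finset.card_range, nsmul_eq_mul]
      apply squeeze_zero' (Eventually.of_forall fun N => norm_nonneg _)
        ((eventually_ge_atTop 1).mono key)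
      -- tendsto of the bound
      have hA : Tendsto (fun N : ℕ => ((N:ℝ))^(1-2*lam)) atTop (nhds 0) := by
        have h1 := (tendsto_rpow_neg_atTop (by linarith : (0:ℝ) < 2*lam - 1)).comp
          tendsto_natCast_atTop_atTop
        have h2 : (1-2*lam) = -(2*lam-1) := by ring
        rw [h2]
        exact h1
      have hB : Tendsto (fun N : ℕ => ((t/(N:ℝ)))^lam) atTop (nhds 0) := by
        have h1 : Tendsto (fun N : ℕ => t/(N:ℝ)) atTop (nhds 0) :=
          tendsto_const_div_atTop_nhds_zero_nat t
        have h2 := ((Real.continuousAt_rpow_const 0 lam (Or.inr hlam0.le)).tendsto).comp h1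
        simpa [Real.zero_rpow hlam0.ne', Function.comp_def] using h2
      have hg : Tendsto (fun N : ℕ => c1*(t^lam)^2*((N:ℝ))^(1-2*lam) + c2*t*((t/(N:ℝ)))^lam)
          atTop (nhds 0) := by
        have := (hA.const_mul (c1*(t^lam)^2)).add (hB.const_mul (c2*t))
        simpa using this
      apply hg.congr'
      filter_upwards [eventually_ge_atTop 1] with N hN
      have hNpos : (0:ℝ) < (N:ℝ) := by exact_mod_cast hN
      have hNl : (0:ℝ) < ((N:ℝ))^lam := Real.rpow_pos_of_pos hNpos lam
      have e1 : ((t/(N:ℝ)))^lam = t^lam / ((N:ℝ))^lam := Real.div_rpow h0.le hNpos.le lam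
      have e2 : ((N:ℝ))^(1-2*lam) = (N:ℝ) / (((N:ℝ))^lam)^2 := by
        rw [show (1-2*lam) = 1 - (lam + lam) by ring, Real.rpow_sub hNpos, Real.rpow_one,
          Real.rpow_add hNpos, sq]
      rw [e1, e2]
      field_simp
    · -- the equation
      have hIeq : (∫ s in (0:ℝ)..t, (kappa - theta * X s)) =
          (1-alpha) * ∫ s in (0:ℝ)..t, (kappa/(1-alpha) - theta/(1-alpha) * X s) := by
        rw [← intervalIntegral.integral_const_mul]
        apply intervalIntegral.integral_congr
        intro s hs
        field_simp
      have hfin : 1/(1-alpha) * ((1-alpha)*(X t - X 0) -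
          (∫ s in (0:ℝ)..t, (kappa - theta * X s))) =
          (X t - X 0) - ∫ s in (0:ℝ)..t, (kappa/(1-alpha) - theta/(1-alpha) * X s) := by
        rw [hIeq]
        field_simp
      rw [hfin]
      ring
end

section
/- Let λ ∈ (0,1), p ≥ 2, λ_p := λ − 2/p, and suppose γλ_p + λ_p > 1. Suppose random variables A, B ≥ 0 satisfy E[A²] < ∞, sup over paths |Y_t − Ỹ_t^{(n)}| ≤ A on the event Ω \ 𝒜_n where P(Ω \ 𝒜_n) ≤ C₁ δ_n^{γλ_p+λ_p−1}, Y = Ỹ^{(n)} on 𝒜_n, and E[sup_t |Ỹ_t^{(n)} − Ŷ_t^{N,n}|] ≤ C₂ (1+c_n) e^{c_n} N^{−λ_p}. Then E[sup_{t∈[0,T]} |Y_t − Ŷ_t^{N,n}|] ≤ C (δ_n^{(γλ_p+λ_p−1)/2} + (1+c_n) e^{c_n} N^{−λ_p}) for a constant C independent of n and N. -/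
open Set Real MeasureTheory

/-- Error decomposition of the semi-heuristic Euler scheme: combining the truncation
error (via Cauchy–Schwarz on the bad event) and the Euler error of the truncated
equation yields the total error bound with a constant independent of n and N. -/
theorem stmt16 {Ω : Type*} [MeasureSpace Ω]
    [IsProbabilityMeasure (volume : Measure Ω)]
    (gam lam p lamp C1 C2 : ℝ) (hp : 2 ≤ p) (hlam : lam ∈ Set.Ioo (0:ℝ) 1)
    (hlamp : lamp = lam - 2 / p) (hcond : 1 < gam * lamp + lamp)
    (hC1 : 0 < C1) (hC2 : 0 < C2)
    (δ c : ℕ → ℝ) (hδ : ∀ n, 0 < δ n) (hcpos : ∀ n, 0 ≤ c n)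
    (A : Ω → ℝ) (hA0 : ∀ ω, 0 ≤ A ω)
    (hA : Integrable (fun ω => A ω ^ 2))
    (DY : ℕ → Ω → ℝ) (DE DT : ℕ → ℕ → Ω → ℝ)
    (An : ℕ → Set Ω) (hAn : ∀ n, MeasurableSet (An n))
    (hDYmeas : ∀ n, Measurable (DY n)) (hDY0 : ∀ n ω, 0 ≤ DY n ω)
    (hDYA : ∀ n, ∀ ω ∉ An n, DY n ω ≤ A ω)
    (hDYeq : ∀ n, ∀ ω ∈ An n, DY n ω = 0)
    (hP : ∀ n, (volume (An n)ᶜ).toReal ≤ C1 * δ n ^ (gam * lamp + lamp - 1))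
    (hDEint : ∀ n N, 1 ≤ N → Integrable (DE n N))
    (hDE : ∀ n N, 1 ≤ N →
      ∫ ω, DE n N ω ≤ C2 * (1 + c n) * Real.exp (c n) * (N : ℝ) ^ (-lamp))
    (htri : ∀ n N ω, DT n N ω ≤ DY n ω + DE n N ω)
    (hDTint : ∀ n N, 1 ≤ N → Integrable (DT n N)) :
    ∃ C, 0 < C ∧ ∀ n N : ℕ, 1 ≤ N →
      ∫ ω, DT n N ω ≤ C * (δ n ^ ((gam * lamp + lamp - 1) / 2) +
        (1 + c n) * Real.exp (c n) * (N : ℝ) ^ (-lamp)) := by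
  have he : 0 < gam * lamp + lamp - 1 := by linarith
  set e := gam * lamp + lamp - 1 with hedef
  set I := ∫ ω, A ω ^ 2 with hI
  have hI0 : 0 ≤ I := integral_nonneg fun ω => sq_nonneg _
  refine ⟨Real.sqrt ((I + 1) * C1) + C2, by positivity, ?_⟩
  intro n N hN
  have hδe : 0 < δ n ^ e := Real.rpow_pos_of_pos (hδ n) e
  set a := Real.sqrt (I + 1) with ha
  set b := Real.sqrt (C1 * δ n ^ e) with hb
  have ha0 : 0 < a := Real.sqrt_pos.2 (by linarith)
  have hb0 : 0 < b := Real.sqrt_pos.2 (by positivity)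
  have ha2 : a ^ 2 = I + 1 := Real.sq_sqrt (by linarith)
  have hb2 : b ^ 2 = C1 * δ n ^ e := Real.sq_sqrt (by positivity)
  set s := a / b with hs
  have hs0 : 0 < s := div_pos ha0 hb0
  -- pointwise bound on DY
  have hpt : ∀ ω, DY n ω ≤ A ω ^ 2 / (2 * s) +
      (An n)ᶜ.indicator (fun _ => s / 2) ω := by
    intro ω
    by_cases hω : ω ∈ An n
    · rw [hDYeq n ω hω, Set.indicator_of_notMem (by simpa using hω)]
      positivity
    · rw [Set.indicator_of_mem (by simpa using hω)]
      have h1 : DY n ω ≤ A ω := hDYA n ω hω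
      have h2 : A ω ≤ A ω ^ 2 / (2 * s) + s / 2 := by
        rw [div_add_div _ _ (by positivity : (2 * s) ≠ 0) two_ne_zero,
          le_div_iff₀ (by positivity)]
        nlinarith [sq_nonneg (A ω - s)]
      linarith
  have hgint : Integrable (fun ω => A ω ^ 2 / (2 * s) +
      (An n)ᶜ.indicator (fun _ => s / 2) ω) :=
    (hA.div_const (2 * s)).add ((integrable_const (s / 2)).indicator (hAn n).compl)
  have hDYint : Integrable (DY n) := by
    refine Integrable.mono' hgint (hDYmeas n).aestronglyMeasurable
      (ae_of_all _ fun ω => ?_)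
    rw [Real.norm_eq_abs, abs_of_nonneg (hDY0 n ω)]
    exact hpt ω
  have hDYb : ∫ ω, DY n ω ≤ a * b := by
    have h1 : ∫ ω, DY n ω ≤ ∫ ω, (A ω ^ 2 / (2 * s) +
        (An n)ᶜ.indicator (fun _ => s / 2) ω) :=
      integral_mono hDYint hgint hpt
    have h2 : ∫ ω, (A ω ^ 2 / (2 * s) + (An n)ᶜ.indicator (fun _ => s / 2) ω)
        = I / (2 * s) + (volume (An n)ᶜ).toReal * (s / 2) := by
      rw [integral_add (hA.div_const (2 * s))
        ((integrable_const (s / 2)).indicator (hAn n).compl),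
        integral_div, integral_indicator_const _ (hAn n).compl]
      simp [smul_eq_mul]
      rfl
    have hPn := hP n
    have h3 : I / (2 * s) + (volume (An n)ᶜ).toReal * (s / 2) ≤
        (I + 1) / (2 * s) + (C1 * δ n ^ e) * (s / 2) := by
      have hT := ENNReal.toReal_nonneg (a := volume (An n)ᶜ)
      have hh : (volume (An n)ᶜ).toReal * (s / 2) ≤ (C1 * δ n ^ e) * (s / 2) :=
        mul_le_mul_of_nonneg_right hPn (by positivity)
      have hh2 : I / (2 * s) ≤ (I + 1) / (2 * s) := by gcongr; linarith
      linarith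
    have h4 : (I + 1) / (2 * s) + (C1 * δ n ^ e) * (s / 2) = a * b := by
      rw [hs, ← ha2, ← hb2]
      field_simp
      ring
    linarith
  -- combine
  have hDEb := hDE n N hN
  have htot : ∫ ω, DT n N ω ≤ (∫ ω, DY n ω) + ∫ ω, DE n N ω := by
    have h := integral_mono (hDTint n N hN) (hDYint.add (hDEint n N hN))
      (fun ω => htri n N ω)
    simp only [Pi.add_apply] at h
    rwa [integral_add hDYint (hDEint n N hN)] at h
  have hab : a * b = Real.sqrt ((I + 1) * C1) * δ n ^ (e / 2) := by
    have h5 : δ n ^ (e / 2) = Real.sqrt (δ n ^ e) := by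
      rw [Real.sqrt_eq_rpow, ← Real.rpow_mul (hδ n).le]
      ring_nf
    have h6 : a * b = Real.sqrt ((I + 1) * (C1 * δ n ^ e)) :=
      (Real.sqrt_mul (by linarith) _).symm
    rw [h6, h5, ← Real.sqrt_mul (by positivity : (0:ℝ) ≤ (I + 1) * C1), mul_assoc]
  have ht1 : 0 ≤ δ n ^ (e / 2) := (Real.rpow_pos_of_pos (hδ n) _).le
  have ht2 : 0 ≤ (1 + c n) * Real.exp (c n) * (N : ℝ) ^ (-lamp) := by
    have := hcpos n
    positivity
  have hm1 := mul_nonneg (Real.sqrt_nonneg ((I + 1) * C1)) ht2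
  have hm2 := mul_nonneg hC2.le ht1
  have hDY2 : ∫ ω, DY n ω ≤ Real.sqrt ((I + 1) * C1) * δ n ^ (e / 2) := by
    rw [← hab]; exact hDYb
  have key : (Real.sqrt ((I + 1) * C1) + C2) *
      (δ n ^ (e / 2) + (1 + c n) * Real.exp (c n) * (N : ℝ) ^ (-lamp)) =
      Real.sqrt ((I + 1) * C1) * δ n ^ (e / 2) +
        C2 * (1 + c n) * Real.exp (c n) * (N : ℝ) ^ (-lamp) +
        (Real.sqrt ((I + 1) * C1) * ((1 + c n) * Real.exp (c n) * (N : ℝ) ^ (-lamp)) +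
          C2 * δ n ^ (e / 2)) := by ring
  linarith [htot, hDY2, hDEb, hm1, hm2]
end

section
/- Let φ, ψ : [0,T] → ℝ be λ-Hölder continuous with φ(t) < ψ(t) for all t, and let b : D_{0,0} → ℝ (D_{0,0} = {(t,y) : φ(t) < y < ψ(t)}) be continuous, locally Lipschitz in y on each D_{ε₁,ε₂}, satisfy b(t,y) ≥ c(y−φ(t))^{−γ} when y − φ(t) < y* and b(t,y) ≤ −c(ψ(t)−y)^{−γ} when ψ(t) − y < y*, with γ > (1−λ)/λ. Then for any λ-Hölder continuous path Z with Z(0) = 0 and any Y₀ ∈ (φ(0), ψ(0)), the integral equation Y(t) = Y₀ + ∫₀ᵗ b(s,Y(s)) ds + Z(t) has a unique continuous solution on [0,T], and this solution satisfies φ(t) < Y(t) < ψ(t) for all t ∈ [0,T]. -/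
open Set Real MeasureTheory

set_option maxHeartbeats 2000000

lemma sandKey {lam gam c A : ℝ} (hlam : lam ∈ Set.Ioo (0:ℝ) 1) (hgam : (1 - lam) / lam < gam)
    (hc : 0 < c) (hA : 0 < A) :
    ∃ εs : ℝ, 0 < εs ∧ ∀ ε Δ : ℝ, 0 < ε → ε ≤ εs → 0 < Δ →
      c * ε ^ (-gam) * Δ + ε / 2 ≤ A * Δ ^ lam → False := by
  obtain ⟨hl0, hl1⟩ := hlam
  have h1l : 0 < 1 - lam := by linarith
  set q : ℝ := lam / (1 - lam) with hqdef
  have hq : 0 < q := div_pos hl0 h1l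
  have hgam0 : 0 < gam := lt_trans (div_pos (by linarith) hl0) hgam
  have hθ : 1 < gam * q := by
    have : (1 - lam) / lam * q = 1 := by
      rw [hqdef]; field_simp
    calc (1:ℝ) = (1 - lam) / lam * q := this.symm
    _ < gam * q := by
      exact mul_lt_mul_of_pos_right hgam hq
  set B : ℝ := 2 * A * (A / c) ^ q with hBdef
  have hB : 0 < B := by
    have : (0:ℝ) < (A / c) ^ q := Real.rpow_pos_of_pos (div_pos hA hc) q
    positivity
  refine ⟨(1 / (2 * B)) ^ (1 / (gam * q - 1)), Real.rpow_pos_of_pos (by positivity) _, ?_⟩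
  intro ε Δ hε hεs hΔ h
  have hεg : (0:ℝ) < ε ^ gam := Real.rpow_pos_of_pos hε gam
  have hΔl : (0:ℝ) < Δ ^ lam := Real.rpow_pos_of_pos hΔ lam
  have h1 : c * ε ^ (-gam) * Δ ≤ A * Δ ^ lam := by
    nlinarith [mul_pos (mul_pos hc (Real.rpow_pos_of_pos hε (-gam))) hΔ]
  have h2 : ε / 2 ≤ A * Δ ^ lam := by
    nlinarith [mul_pos (mul_pos hc (Real.rpow_pos_of_pos hε (-gam))) hΔ]
  have hsplit : Δ = Δ ^ lam * Δ ^ (1 - lam) := by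
    rw [← Real.rpow_add hΔ]; simp
  have hmul : ε ^ (-gam) * ε ^ gam = 1 := by
    rw [← Real.rpow_add hε]; simp
  have e1 : c * ε ^ (-gam) * Δ * ε ^ gam = c * Δ := by
    have : c * ε ^ (-gam) * Δ * ε ^ gam = c * Δ * (ε ^ (-gam) * ε ^ gam) := by ring
    rw [this, hmul, mul_one]
  have h1' : c * Δ ≤ A * Δ ^ lam * ε ^ gam := by
    rw [← e1]; exact mul_le_mul_of_nonneg_right h1 hεg.le
  have h3' : c * Δ ^ (1 - lam) ≤ A * ε ^ gam := by
    refine le_of_mul_le_mul_left ?_ hΔl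
    calc Δ ^ lam * (c * Δ ^ (1 - lam)) = c * (Δ ^ lam * Δ ^ (1 - lam)) := by ring
    _ = c * Δ := by rw [← hsplit]
    _ ≤ A * Δ ^ lam * ε ^ gam := h1'
    _ = Δ ^ lam * (A * ε ^ gam) := by ring
  have h3 : Δ ^ (1 - lam) ≤ A / c * ε ^ gam := by
    rw [div_mul_eq_mul_div, le_div_iff₀ hc]; linarith
  -- so 1 ≤ B * ε ^ (gam*q - 1)
  have h4 : Δ ^ lam ≤ (A / c * ε ^ gam) ^ q := by
    have : (Δ ^ (1 - lam)) ^ q ≤ (A / c * ε ^ gam) ^ q :=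
      Real.rpow_le_rpow (Real.rpow_pos_of_pos hΔ _).le h3 hq.le
    rwa [← Real.rpow_mul hΔ.le, mul_comm, hqdef,
      div_mul_cancel₀ lam (by linarith : (1:ℝ) - lam ≠ 0)] at this
  have h5 : ε / 2 ≤ A * ((A / c) ^ q * ε ^ (gam * q)) := by
    have expand : (A / c * ε ^ gam) ^ q = (A / c) ^ q * ε ^ (gam * q) := by
      rw [Real.mul_rpow (div_pos hA hc).le hεg.le, ← Real.rpow_mul hε.le]
    calc ε / 2 ≤ A * Δ ^ lam := h2
    _ ≤ A * (A / c * ε ^ gam) ^ q := mul_le_mul_of_nonneg_left h4 hA.le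
    _ = A * ((A / c) ^ q * ε ^ (gam * q)) := by rw [expand]
  have hsplit2 : ε ^ (gam * q) = ε ^ (gam * q - 1) * ε := by
    rw [← Real.rpow_add_one hε.ne' (gam * q - 1)]; ring_nf
  have h6 : 1 ≤ B * ε ^ (gam * q - 1) := by
    refine le_of_mul_le_mul_right ?_ hε
    calc 1 * ε = ε := one_mul ε
    _ ≤ 2 * (A * ((A / c) ^ q * (ε ^ (gam * q - 1) * ε))) := by
        rw [← hsplit2]; linarith
    _ = B * ε ^ (gam * q - 1) * ε := by rw [hBdef]; ring
  -- but ε ^ (gam*q-1) < 1/B : contradiction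
  have h7 : ε ^ (gam * q - 1) ≤ (1 / (2 * B)) := by
    have hεsle : ε ^ (gam * q - 1) ≤ ((1 / (2 * B)) ^ (1 / (gam * q - 1))) ^ (gam * q - 1) :=
      Real.rpow_le_rpow hε.le hεs (by linarith)
    rwa [← Real.rpow_mul (by positivity), one_div_mul_cancel (by linarith : gam * q - 1 ≠ 0),
      Real.rpow_one] at hεsle
  have hhalf : B * (1 / (2 * B)) = 1 / 2 := by field_simp
  have := mul_le_mul_of_nonneg_left h7 hB.le
  linarith
lemma sandHolderCont {lam K T : ℝ} (hlam : 0 < lam) {u : ℝ → ℝ}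
    (h : ∀ s ∈ Set.Icc 0 T, ∀ t ∈ Set.Icc 0 T, |u t - u s| ≤ K * |t - s| ^ lam) :
    ContinuousOn u (Set.Icc 0 T) := by
  intro s hs
  have hb : Filter.Tendsto (fun t => K * |t - s| ^ lam) (nhdsWithin s (Set.Icc 0 T)) (nhds 0) := by
    have hc : ContinuousAt (fun t : ℝ => K * |t - s| ^ lam) s := by
      have h1 : ContinuousAt (fun t : ℝ => |t - s|) s := by fun_prop
      have h2 : ContinuousAt (fun x : ℝ => x ^ lam) (|s - s|) := by
        simp only [sub_self, abs_zero]
        exact Real.continuousAt_rpow_const 0 lam (Or.inr hlam.le)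
      exact (ContinuousAt.comp (by simpa using h2) h1).const_mul K
    have : (fun t : ℝ => K * |t - s| ^ lam) s = 0 := by
      simp [Real.zero_rpow hlam.ne']
    have := (hc.continuousWithinAt (s := Set.Icc 0 T)).tendsto
    simpa [Real.zero_rpow hlam.ne'] using this
  rw [ContinuousWithinAt, tendsto_iff_dist_tendsto_zero]
  refine squeeze_zero' ?_ ?_ hb
  · exact Filter.Eventually.of_forall fun t => dist_nonneg
  · filter_upwards [self_mem_nhdsWithin] with t ht
    simpa [Real.dist_eq] using h s hs t ht
lemma sandApriori (T lam gam c ε A Y₀ : ℝ) (phi psi Z W : ℝ → ℝ) (β : ℝ → ℝ → ℝ)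
    (hT : 0 < T) (hε : 0 < ε)
    (hkey : ∀ Δ : ℝ, 0 < Δ → c * ε ^ (-gam) * Δ + ε / 2 ≤ A * Δ ^ lam → False)
    (hphi : Continuous phi) (hpsi : Continuous psi) (hZc : Continuous Z) (hWc : Continuous W)
    (hHA : ∀ s ∈ Set.Icc 0 T, ∀ t ∈ Set.Icc 0 T,
      |phi t - phi s| + |psi t - psi s| + |Z t - Z s| ≤ A * |t - s| ^ lam)
    (heq : ∀ t ∈ Set.Icc 0 T, W t = Y₀ + (∫ s in (0:ℝ)..t, β s (W s)) + Z t)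
    (hW0l : ε ≤ Y₀ - phi 0) (hW0u : ε ≤ psi 0 - Y₀) (hZ0 : Z 0 = 0)
    (hcont : ∀ t ∈ Set.Icc 0 T,
      (∀ s ∈ Set.Icc 0 t, ε / 2 ≤ W s - phi s ∧ ε / 2 ≤ psi s - W s) →
      ContinuousOn (fun s => β s (W s)) (Set.Icc 0 t))
    (hlow : ∀ s ∈ Set.Icc 0 T, ε / 2 ≤ W s - phi s → W s - phi s ≤ ε → ε / 2 ≤ psi s - W s →
      c * ε ^ (-gam) ≤ β s (W s))
    (hup : ∀ s ∈ Set.Icc 0 T, ε / 2 ≤ psi s - W s → psi s - W s ≤ ε → ε / 2 ≤ W s - phi s →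
      β s (W s) ≤ -(c * ε ^ (-gam))) :
    ∀ t ∈ Set.Icc 0 T, ε / 2 < W t - phi t ∧ ε / 2 < psi t - W t := by
  by_contra hcon
  push_neg at hcon
  obtain ⟨t0, ht0, hbad⟩ := hcon
  have hW00 : W 0 = Y₀ := by
    have := heq 0 ⟨le_refl 0, hT.le⟩
    simpa [hZ0] using this
  set f : ℝ → ℝ := fun t => W t - phi t with hfdef
  set g : ℝ → ℝ := fun t => psi t - W t with hgdef
  have hfc : Continuous f := hWc.sub hphi
  have hgc : Continuous g := hpsi.sub hWc
  set E : Set ℝ := Set.Icc 0 T ∩ ({t | f t ≤ ε / 2} ∪ {t | g t ≤ ε / 2}) with hEdef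
  have hEclosed : IsClosed E :=
    isClosed_Icc.inter ((isClosed_le hfc continuous_const).union
      (isClosed_le hgc continuous_const))
  have hEne : E.Nonempty := by
    refine ⟨t0, ht0, ?_⟩
    by_cases hf0 : ε / 2 < f t0
    · exact Or.inr (hbad hf0)
    · exact Or.inl (le_of_not_gt hf0)
  have hEbdd : BddBelow E := ⟨0, fun x hx => hx.1.1⟩
  set τ := sInf E with hτdef
  have hτE : τ ∈ E := hEclosed.csInf_mem hEne hEbdd
  have hτIcc : τ ∈ Set.Icc 0 T := hτE.1
  have h0f : ε / 2 < f 0 := by simp only [hfdef, hW00]; linarith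
  have h0g : ε / 2 < g 0 := by simp only [hgdef, hW00]; linarith
  have h0nE : (0 : ℝ) ∉ E := by
    intro h
    rcases h.2 with h' | h' <;> [exact absurd h' (not_le.mpr h0f); exact absurd h' (not_le.mpr h0g)]
  have hτpos : 0 < τ := lt_of_le_of_ne hτIcc.1 (fun h => h0nE (h ▸ hτE))
  have hpre : ∀ s, 0 ≤ s → s < τ → ε / 2 < f s ∧ ε / 2 < g s := by
    intro s hs0 hsτ
    have hsE : s ∉ E := fun hmem => absurd (csInf_le hEbdd hmem) (not_le.mpr hsτ)
    have hsIcc : s ∈ Set.Icc 0 T := ⟨hs0, le_trans hsτ.le hτIcc.2⟩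
    constructor
    · by_contra hc'
      exact hsE ⟨hsIcc, Or.inl (le_of_not_gt hc')⟩
    · by_contra hc'
      exact hsE ⟨hsIcc, Or.inr (le_of_not_gt hc')⟩
  have hclos : ∀ s ∈ Set.Icc 0 τ, ε / 2 ≤ f s ∧ ε / 2 ≤ g s := by
    have hcl : IsClosed ({t | ε / 2 ≤ f t} ∩ {t | ε / 2 ≤ g t}) :=
      (isClosed_le continuous_const hfc).inter (isClosed_le continuous_const hgc)
    have hsub : Set.Icc 0 τ ⊆ {t | ε / 2 ≤ f t} ∩ {t | ε / 2 ≤ g t} := by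
      rw [← closure_Ico hτpos.ne]
      exact hcl.closure_subset_iff.mpr
        (fun s hs => ⟨(hpre s hs.1 hs.2).1.le, (hpre s hs.1 hs.2).2.le⟩)
    exact fun s hs => hsub hs
  have hIccsub : Set.Icc 0 τ ⊆ Set.Icc 0 T := Set.Icc_subset_Icc le_rfl hτIcc.2
  have hcont' : ContinuousOn (fun s => β s (W s)) (Set.Icc 0 τ) :=
    hcont τ hτIcc hclos
  -- helper to finish either case
  rcases hτE.2 with hfτ | hgτ
  · -- lower barrier case
    have hfτ' : f τ = ε / 2 := le_antisymm hfτ (hclos τ ⟨hτpos.le, le_rfl⟩).1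
    set S : Set ℝ := Set.Icc 0 τ ∩ {s | ε ≤ f s} with hSdef
    have hSclosed : IsClosed S := isClosed_Icc.inter (isClosed_le continuous_const hfc)
    have hSne : S.Nonempty := ⟨0, ⟨le_rfl, hτpos.le⟩, by simp only [mem_setOf_eq, hfdef, hW00]; linarith⟩
    have hSbdd : BddAbove S := ⟨τ, fun x hx => hx.1.2⟩
    set t1 := sSup S with ht1def
    have ht1S : t1 ∈ S := hSclosed.csSup_mem hSne hSbdd
    have ht1Icc : t1 ∈ Set.Icc 0 τ := ht1S.1
    have ht1τ : t1 < τ := lt_of_le_of_ne ht1Icc.2 (by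
      intro h
      have h2 := ht1S.2
      simp only [mem_setOf_eq] at h2
      rw [h, hfτ'] at h2
      linarith)
    have hIocle : ∀ s ∈ Set.Ioc t1 τ, f s ≤ ε := by
      intro s hs
      by_contra hgt
      push_neg at hgt
      have hsS : s ∈ S := ⟨⟨le_trans ht1Icc.1 hs.1.le, hs.2⟩, hgt.le⟩
      exact absurd (le_csSup hSbdd hsS) (not_le.mpr hs.1)
    have hfle : ∀ s ∈ Set.Icc t1 τ, f s ≤ ε := by
      have hsub : Set.Icc t1 τ ⊆ {s | f s ≤ ε} := by
        rw [← closure_Ioc ht1τ.ne]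
        exact (isClosed_le hfc continuous_const).closure_subset_iff.mpr hIocle
      exact fun s hs => hsub hs
    have ht1feq : f t1 = ε := le_antisymm (hfle t1 (Set.left_mem_Icc.mpr ht1τ.le)) ht1S.2
    have hIccsub2 : Set.Icc t1 τ ⊆ Set.Icc 0 τ := Set.Icc_subset_Icc ht1Icc.1 le_rfl
    have hint2 : IntervalIntegrable (fun s => β s (W s)) volume t1 τ := by
      apply ContinuousOn.intervalIntegrable
      rw [uIcc_of_le ht1τ.le]
      exact hcont'.mono hIccsub2
    have hint1 : IntervalIntegrable (fun s => β s (W s)) volume 0 t1 := by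
      apply ContinuousOn.intervalIntegrable
      rw [uIcc_of_le ht1Icc.1]
      exact hcont'.mono (Set.Icc_subset_Icc le_rfl ht1Icc.2)
    have hWdiff : W τ - W t1 = (∫ s in t1..τ, β s (W s)) + (Z τ - Z t1) := by
      have e1 := heq τ hτIcc
      have e2 := heq t1 (hIccsub ht1Icc)
      calc W τ - W t1
          = (Y₀ + (∫ s in (0:ℝ)..τ, β s (W s)) + Z τ)
            - (Y₀ + (∫ s in (0:ℝ)..t1, β s (W s)) + Z t1) := by rw [← e1, ← e2]
        _ = (∫ s in (0:ℝ)..τ, β s (W s)) - (∫ s in (0:ℝ)..t1, β s (W s)) + (Z τ - Z t1) := by ring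
        _ = (∫ s in t1..τ, β s (W s)) + (Z τ - Z t1) := by
            rw [← intervalIntegral.integral_add_adjacent_intervals hint1 hint2]; ring
    have hlb : ∀ s ∈ Set.Icc t1 τ, (fun _ => c * ε ^ (-gam)) s ≤ β s (W s) := fun s hs =>
      hlow s (hIccsub (hIccsub2 hs)) (hclos s (hIccsub2 hs)).1 (hfle s hs) (hclos s (hIccsub2 hs)).2
    have hmono := intervalIntegral.integral_mono_on ht1τ.le intervalIntegrable_const hint2 hlb
    rw [intervalIntegral.integral_const, smul_eq_mul] at hmono
    have hhol := hHA t1 (hIccsub ht1Icc) τ hτIcc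
    rw [abs_of_nonneg (by linarith : (0:ℝ) ≤ τ - t1)] at hhol
    refine hkey (τ - t1) (by linarith) ?_
    have hfd : W τ - phi τ - (W t1 - phi t1) = ε / 2 - ε := by
      have h1 : W τ - phi τ = ε / 2 := hfτ'
      have h2 : W t1 - phi t1 = ε := ht1feq
      rw [h1, h2]
    have ha1 := le_abs_self (phi τ - phi t1)
    have ha2 := neg_abs_le (Z τ - Z t1)
    have ha3 := abs_nonneg (psi τ - psi t1)
    linarith
  · -- upper barrier case
    have hgτ' : g τ = ε / 2 := le_antisymm hgτ (hclos τ ⟨hτpos.le, le_rfl⟩).2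
    set S : Set ℝ := Set.Icc 0 τ ∩ {s | ε ≤ g s} with hSdef
    have hSclosed : IsClosed S := isClosed_Icc.inter (isClosed_le continuous_const hgc)
    have hSne : S.Nonempty := ⟨0, ⟨le_rfl, hτpos.le⟩, by simp only [mem_setOf_eq, hgdef, hW00]; linarith⟩
    have hSbdd : BddAbove S := ⟨τ, fun x hx => hx.1.2⟩
    set t1 := sSup S with ht1def
    have ht1S : t1 ∈ S := hSclosed.csSup_mem hSne hSbdd
    have ht1Icc : t1 ∈ Set.Icc 0 τ := ht1S.1
    have ht1τ : t1 < τ := lt_of_le_of_ne ht1Icc.2 (by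
      intro h
      have h2 := ht1S.2
      simp only [mem_setOf_eq] at h2
      rw [h, hgτ'] at h2
      linarith)
    have hIocle : ∀ s ∈ Set.Ioc t1 τ, g s ≤ ε := by
      intro s hs
      by_contra hgt
      push_neg at hgt
      have hsS : s ∈ S := ⟨⟨le_trans ht1Icc.1 hs.1.le, hs.2⟩, hgt.le⟩
      exact absurd (le_csSup hSbdd hsS) (not_le.mpr hs.1)
    have hfle : ∀ s ∈ Set.Icc t1 τ, g s ≤ ε := by
      have hsub : Set.Icc t1 τ ⊆ {s | g s ≤ ε} := by
        rw [← closure_Ioc ht1τ.ne]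
        exact (isClosed_le hgc continuous_const).closure_subset_iff.mpr hIocle
      exact fun s hs => hsub hs
    have ht1feq : g t1 = ε := le_antisymm (hfle t1 (Set.left_mem_Icc.mpr ht1τ.le)) ht1S.2
    have hIccsub2 : Set.Icc t1 τ ⊆ Set.Icc 0 τ := Set.Icc_subset_Icc ht1Icc.1 le_rfl
    have hint2 : IntervalIntegrable (fun s => β s (W s)) volume t1 τ := by
      apply ContinuousOn.intervalIntegrable
      rw [uIcc_of_le ht1τ.le]
      exact hcont'.mono hIccsub2
    have hint1 : IntervalIntegrable (fun s => β s (W s)) volume 0 t1 := by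
      apply ContinuousOn.intervalIntegrable
      rw [uIcc_of_le ht1Icc.1]
      exact hcont'.mono (Set.Icc_subset_Icc le_rfl ht1Icc.2)
    have hWdiff : W τ - W t1 = (∫ s in t1..τ, β s (W s)) + (Z τ - Z t1) := by
      have e1 := heq τ hτIcc
      have e2 := heq t1 (hIccsub ht1Icc)
      calc W τ - W t1
          = (Y₀ + (∫ s in (0:ℝ)..τ, β s (W s)) + Z τ)
            - (Y₀ + (∫ s in (0:ℝ)..t1, β s (W s)) + Z t1) := by rw [← e1, ← e2]
        _ = (∫ s in (0:ℝ)..τ, β s (W s)) - (∫ s in (0:ℝ)..t1, β s (W s)) + (Z τ - Z t1) := by ring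
        _ = (∫ s in t1..τ, β s (W s)) + (Z τ - Z t1) := by
            rw [← intervalIntegral.integral_add_adjacent_intervals hint1 hint2]; ring
    have hlb : ∀ s ∈ Set.Icc t1 τ, β s (W s) ≤ (fun _ => -(c * ε ^ (-gam))) s := fun s hs =>
      hup s (hIccsub (hIccsub2 hs)) (hclos s (hIccsub2 hs)).2 (hfle s hs) (hclos s (hIccsub2 hs)).1
    have hmono := intervalIntegral.integral_mono_on ht1τ.le hint2 intervalIntegrable_const hlb
    rw [intervalIntegral.integral_const, smul_eq_mul] at hmono
    have hhol := hHA t1 (hIccsub ht1Icc) τ hτIcc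
    rw [abs_of_nonneg (by linarith : (0:ℝ) ≤ τ - t1)] at hhol
    refine hkey (τ - t1) (by linarith) ?_
    have hfd1 : psi τ - W τ = ε / 2 := hgτ'
    have hfd2 : psi t1 - W t1 = ε := ht1feq
    have ha1 := neg_abs_le (psi τ - psi t1)
    have ha2 := le_abs_self (Z τ - Z t1)
    have ha3 := abs_nonneg (phi τ - phi t1)
    linarith

/-- Existence and uniqueness of the two-sided sandwiched solution: the integral
equation with a drift blowing up near both Hölder barriers has a unique continuous
solution, which stays strictly between φ and ψ. -/
theorem stmt18 (T lam gam c ystar K Y₀ : ℝ) (hT : 0 < T)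
    (hlam : lam ∈ Set.Ioo (0:ℝ) 1) (hgam : (1 - lam) / lam < gam)
    (hc : 0 < c) (hystar : 0 < ystar)
    (phi psi : ℝ → ℝ)
    (hbar : ∀ t ∈ Set.Icc 0 T, phi t < psi t)
    (hHol : ∀ s ∈ Set.Icc 0 T, ∀ t ∈ Set.Icc 0 T,
      |phi t - phi s| + |psi t - psi s| ≤ K * |t - s| ^ lam)
    (b : ℝ → ℝ → ℝ)
    (hbc : ContinuousOn (fun p : ℝ × ℝ => b p.1 p.2)
      {p : ℝ × ℝ | p.1 ∈ Set.Icc 0 T ∧ phi p.1 < p.2 ∧ p.2 < psi p.1})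
    (hlip : ∀ ε₁ ε₂ : ℝ, 0 < ε₁ → 0 < ε₂ → ∃ cε, 0 < cε ∧
      ∀ t ∈ Set.Icc 0 T, ∀ y₁ y₂ : ℝ,
        phi t + ε₁ < y₁ → y₁ < psi t - ε₂ → phi t + ε₁ < y₂ → y₂ < psi t - ε₂ →
        |b t y₁ - b t y₂| ≤ cε * |y₁ - y₂|)
    (hblow₁ : ∀ t ∈ Set.Icc 0 T, ∀ y : ℝ, phi t < y → y < psi t →
      y - phi t < ystar → c * (y - phi t) ^ (-gam) ≤ b t y)
    (hblow₂ : ∀ t ∈ Set.Icc 0 T, ∀ y : ℝ, phi t < y → y < psi t →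
      psi t - y < ystar → b t y ≤ -(c * (psi t - y) ^ (-gam)))
    (Z : ℝ → ℝ) (Lz : ℝ) (hZ0 : Z 0 = 0)
    (hZH : ∀ s ∈ Set.Icc 0 T, ∀ t ∈ Set.Icc 0 T, |Z t - Z s| ≤ Lz * |t - s| ^ lam)
    (hY₀ : Y₀ ∈ Set.Ioo (phi 0) (psi 0)) :
    ∃ Y : ℝ → ℝ,
      (ContinuousOn Y (Set.Icc 0 T) ∧
        (∀ t ∈ Set.Icc 0 T, Y t = Y₀ + (∫ s in (0:ℝ)..t, b s (Y s)) + Z t) ∧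
        ∀ t ∈ Set.Icc 0 T, phi t < Y t ∧ Y t < psi t) ∧
      ∀ Y' : ℝ → ℝ, ContinuousOn Y' (Set.Icc 0 T) →
        (∀ t ∈ Set.Icc 0 T, Y' t = Y₀ + (∫ s in (0:ℝ)..t, b s (Y' s)) + Z t) →
        ∀ t ∈ Set.Icc 0 T, Y' t = Y t := by
  obtain ⟨hl0, hl1⟩ := hlam
  have hgam0 : 0 < gam := lt_trans (div_pos (by linarith) hl0) hgam
  have hTlam : (0:ℝ) < T ^ lam := Real.rpow_pos_of_pos hT lam
  -- nonnegativity of the Hölder constants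
  have h0T : (0:ℝ) ∈ Set.Icc 0 T := ⟨le_rfl, hT.le⟩
  have hTT : T ∈ Set.Icc 0 T := ⟨hT.le, le_rfl⟩
  have hK0 : 0 ≤ K := by
    have h := hHol 0 h0T T hTT
    rw [sub_zero, abs_of_nonneg hT.le] at h
    nlinarith [abs_nonneg (phi T - phi 0), abs_nonneg (psi T - psi 0)]
  have hLz0 : 0 ≤ Lz := by
    have h := hZH 0 h0T T hTT
    rw [sub_zero, abs_of_nonneg hT.le] at h
    nlinarith [abs_nonneg (Z T - Z 0)]
  set A : ℝ := K + Lz + 1 with hAdef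
  have hA : 0 < A := by positivity
  -- key smallness scale
  obtain ⟨εs, hεs, hkey0⟩ := sandKey ⟨hl0, hl1⟩ hgam hc hA
  -- continuity of the barriers and the noise
  have hφc : ContinuousOn phi (Set.Icc 0 T) := by
    refine sandHolderCont hl0 (K := K) ?_
    intro s hs t ht
    have h := hHol s hs t ht
    have := abs_nonneg (psi t - psi s)
    linarith
  have hψc : ContinuousOn psi (Set.Icc 0 T) := by
    refine sandHolderCont hl0 (K := K) ?_
    intro s hs t ht
    have h := hHol s hs t ht
    have := abs_nonneg (phi t - phi s)
    linarith
  have hZcont : ContinuousOn Z (Set.Icc 0 T) := sandHolderCont hl0 hZH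
  -- minimum width of the band
  obtain ⟨tm, htm, htmmin⟩ := isCompact_Icc.exists_isMinOn ⟨0, h0T⟩ (hψc.sub hφc)
  set m : ℝ := psi tm - phi tm with hmdef
  have hm0 : 0 < m := sub_pos.mpr (hbar tm htm)
  have hm : ∀ t ∈ Set.Icc 0 T, m ≤ psi t - phi t := fun t ht => htmmin ht
  -- the basic scale ε
  set ε : ℝ := min (min εs (ystar / 2)) (min (Y₀ - phi 0) (psi 0 - Y₀)) with hεdef
  have hε : 0 < ε := by
    refine lt_min (lt_min hεs (by linarith)) (lt_min ?_ ?_) <;>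
      [linarith [hY₀.1]; linarith [hY₀.2]]
  have hεεs : ε ≤ εs := le_trans (min_le_left _ _) (min_le_left _ _)
  have hεy : ε ≤ ystar / 2 := le_trans (min_le_left _ _) (min_le_right _ _)
  have hεY0l : ε ≤ Y₀ - phi 0 := le_trans (min_le_right _ _) (min_le_left _ _)
  have hεY0u : ε ≤ psi 0 - Y₀ := le_trans (min_le_right _ _) (min_le_right _ _)
  have hkeyε : ∀ Δ : ℝ, 0 < Δ → c * ε ^ (-gam) * Δ + ε / 2 ≤ A * Δ ^ lam → False :=
    fun Δ hΔ hle => hkey0 ε Δ hε hεεs hΔ hle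
  -- the truncation scale δ
  set δ : ℝ := min (ε / 2) (m / 2) with hδdef
  have hδ0 : 0 < δ := lt_min (by linarith) (by linarith)
  have hδε : δ ≤ ε / 2 := min_le_left _ _
  have hδm : δ ≤ m / 2 := min_le_right _ _
  clear_value ε δ m A
  -- time clamping
  set τc : ℝ → ℝ := fun t => max 0 (min t T) with hτcdef
  have hτcc : Continuous τc := continuous_const.max (continuous_id.min continuous_const)
  have hτcmem : ∀ t, τc t ∈ Set.Icc 0 T :=
    fun t => ⟨le_max_left _ _, max_le hT.le (min_le_right t T)⟩
  have hτcid : ∀ t ∈ Set.Icc 0 T, τc t = t := by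
    intro t ht
    simp only [hτcdef]
    rw [min_eq_left ht.2, max_eq_right ht.1]
  have hτcidem : ∀ t, τc (τc t) = τc t := fun t => hτcid _ (hτcmem t)
  -- clamped barriers and noise
  set pc : ℝ → ℝ := fun t => phi (τc t) with hpcdef
  set sc : ℝ → ℝ := fun t => psi (τc t) with hscdef
  set Zc : ℝ → ℝ := fun t => Z (τc t) with hZcdef
  have hpcc : Continuous pc := hφc.comp_continuous hτcc hτcmem
  have hscc : Continuous sc := hψc.comp_continuous hτcc hτcmem
  have hZcc : Continuous Zc := hZcont.comp_continuous hτcc hτcmem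
  have hpcid : ∀ t ∈ Set.Icc 0 T, pc t = phi t := fun t ht => by
    simp only [hpcdef]; rw [hτcid t ht]
  have hscid : ∀ t ∈ Set.Icc 0 T, sc t = psi t := fun t ht => by
    simp only [hscdef]; rw [hτcid t ht]
  have hZcid : ∀ t ∈ Set.Icc 0 T, Zc t = Z t := fun t ht => by
    simp only [hZcdef]; rw [hτcid t ht]
  have h2δ : ∀ t : ℝ, pc t + δ ≤ sc t - δ := by
    intro t
    have := hm (τc t) (hτcmem t)
    simp only [hpcdef, hscdef]
    linarith
  -- the projection onto the truncated band
  set proj : ℝ → ℝ → ℝ := fun t y => max (pc t + δ) (min y (sc t - δ)) with hprojdef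
  have hproj_ge : ∀ t y, pc t + δ ≤ proj t y := fun t y => le_max_left _ _
  have hproj_le : ∀ t y, proj t y ≤ sc t - δ := fun t y =>
    max_le (h2δ t) (min_le_right _ _)
  have hproj_id : ∀ t y, pc t + δ ≤ y → y ≤ sc t - δ → proj t y = y := by
    intro t y h1 h2
    simp only [hprojdef]
    rw [min_eq_left h2, max_eq_right h1]
  have hproj_lip : ∀ t a a', |proj t a - proj t a'| ≤ |a - a'| := by
    intro t a a'
    simp only [hprojdef]
    calc |max (pc t + δ) (min a (sc t - δ)) - max (pc t + δ) (min a' (sc t - δ))|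
        = |max (min a (sc t - δ)) (pc t + δ) - max (min a' (sc t - δ)) (pc t + δ)| := by
          rw [max_comm (pc t + δ), max_comm (pc t + δ)]
      _ ≤ |min a (sc t - δ) - min a' (sc t - δ)| := abs_max_sub_max_le_abs _ _ _
      _ ≤ max |a - a'| |sc t - δ - (sc t - δ)| := abs_min_sub_min_le_max _ _ _ _
      _ = |a - a'| := by rw [sub_self, abs_zero, max_eq_left (abs_nonneg _)]
  -- the truncated drift
  set bb : ℝ → ℝ → ℝ := fun t y => b (τc t) (proj t y) with hbbdef
  have hmapS : ∀ t y : ℝ, ((τc t, proj t y) : ℝ × ℝ) ∈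
      {p : ℝ × ℝ | p.1 ∈ Set.Icc 0 T ∧ phi p.1 < p.2 ∧ p.2 < psi p.1} := by
    intro t y
    refine ⟨hτcmem t, ?_, ?_⟩
    · have := hproj_ge t y
      simp only [hpcdef] at this
      linarith
    · have := hproj_le t y
      simp only [hscdef] at this
      linarith
  have hprojc : Continuous fun p : ℝ × ℝ => proj p.1 p.2 := by
    apply Continuous.max
    · exact (hpcc.comp continuous_fst).add continuous_const
    · exact continuous_snd.min ((hscc.comp continuous_fst).sub continuous_const)
  have hbbc : Continuous fun p : ℝ × ℝ => bb p.1 p.2 := by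
    have hmap : Continuous fun p : ℝ × ℝ => ((τc p.1, proj p.1 p.2) : ℝ × ℝ) :=
      (hτcc.comp continuous_fst).prodMk hprojc
    exact hbc.comp_continuous hmap fun p => hmapS p.1 p.2
  -- bound on bb
  obtain ⟨lo, hloIcc, hlo'⟩ := isCompact_Icc.exists_isMinOn ⟨0, h0T⟩ hφc
  obtain ⟨hi, hhiIcc, hhi'⟩ := isCompact_Icc.exists_isMaxOn ⟨0, h0T⟩ hψc
  set Kc : Set (ℝ × ℝ) :=
    {p : ℝ × ℝ | p.1 ∈ Set.Icc 0 T ∧ pc p.1 + δ ≤ p.2 ∧ p.2 ≤ sc p.1 - δ} with hKcdef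
  have hKcclosed : IsClosed Kc := by
    apply IsClosed.inter (isClosed_Icc.preimage continuous_fst)
    exact IsClosed.inter
      (isClosed_le ((hpcc.comp continuous_fst).add continuous_const) continuous_snd)
      (isClosed_le continuous_snd ((hscc.comp continuous_fst).sub continuous_const))
  have hKccompact : IsCompact Kc := by
    refine IsCompact.of_isClosed_subset
      ((isCompact_Icc (a := (0:ℝ)) (b := T)).prod
        (isCompact_Icc (a := phi lo) (b := psi hi))) hKcclosed ?_
    rintro ⟨t, y⟩ ⟨ht, h1, h2⟩
    have hlo2 : phi lo ≤ phi (τc t) := hlo' (hτcmem t)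
    have hhi2 : psi (τc t) ≤ psi hi := hhi' (hτcmem t)
    simp only [hpcdef] at h1
    simp only [hscdef] at h2
    exact ⟨ht, by constructor <;> linarith⟩
  have hKcS : Kc ⊆ {p : ℝ × ℝ | p.1 ∈ Set.Icc 0 T ∧ phi p.1 < p.2 ∧ p.2 < psi p.1} := by
    rintro ⟨t, y⟩ ⟨ht, h1, h2⟩
    have hp := hpcid t ht
    have hs := hscid t ht
    exact ⟨ht, by rw [← hp]; linarith, by rw [← hs]; linarith⟩
  obtain ⟨M, hM⟩ := hKccompact.exists_bound_of_continuousOn (hbc.mono hKcS)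
  set M1 : ℝ := |M| with hM1def
  have hM10 : 0 ≤ M1 := abs_nonneg M
  have hKcmem : ∀ t y : ℝ, ((τc t, proj t y) : ℝ × ℝ) ∈ Kc := by
    intro t y
    refine ⟨hτcmem t, ?_, ?_⟩
    · have h := hproj_ge t y
      have : pc (τc t) = pc t := by simp only [hpcdef, hτcidem]
      rw [this]; exact h
    · have h := hproj_le t y
      have : sc (τc t) = sc t := by simp only [hscdef, hτcidem]
      rw [this]; exact h
  have hbbB : ∀ t y : ℝ, |bb t y| ≤ M1 := by
    intro t y
    have := hM _ (hKcmem t y)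
    simp only [Real.norm_eq_abs] at this
    exact this.trans (le_abs_self M)
  -- the vector field
  set v : ℝ → ℝ → ℝ := fun t x => bb t (x + Zc t) with hvdef
  have hvc : Continuous fun p : ℝ × ℝ => v p.1 p.2 := by
    have : Continuous fun p : ℝ × ℝ => ((p.1, p.2 + Zc p.1) : ℝ × ℝ) :=
      continuous_fst.prodMk (continuous_snd.add (hZcc.comp continuous_fst))
    exact hbbc.comp this
  have hvB : ∀ t x : ℝ, |v t x| ≤ M1 := fun t x => hbbB t (x + Zc t)
  -- Lipschitz constant for v
  obtain ⟨cδ, hcδ0, hlipδ⟩ := hlip (δ / 2) (δ / 2) (by linarith) (by linarith)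
  have hvl : ∀ t, LipschitzWith cδ.toNNReal (v t) := by
    intro t
    apply LipschitzWith.of_dist_le_mul
    intro x y
    rw [Real.dist_eq, Real.dist_eq, Real.coe_toNNReal cδ hcδ0.le]
    simp only [hvdef, hbbdef]
    have hb1 := hproj_ge t (x + Zc t)
    have hb2 := hproj_le t (x + Zc t)
    have hb3 := hproj_ge t (y + Zc t)
    have hb4 := hproj_le t (y + Zc t)
    have hlipt := hlipδ (τc t) (hτcmem t) (proj t (x + Zc t)) (proj t (y + Zc t))
      (by simp only [hpcdef] at hb1 ⊢; linarith)
      (by simp only [hscdef] at hb2 ⊢; linarith)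
      (by simp only [hpcdef] at hb3 ⊢; linarith)
      (by simp only [hscdef] at hb4 ⊢; linarith)
    calc |b (τc t) (proj t (x + Zc t)) - b (τc t) (proj t (y + Zc t))|
        ≤ cδ * |proj t (x + Zc t) - proj t (y + Zc t)| := hlipt
      _ ≤ cδ * |x + Zc t - (y + Zc t)| :=
          mul_le_mul_of_nonneg_left (hproj_lip t _ _) hcδ0.le
      _ = cδ * |x - y| := by ring_nf
  -- Picard–Lindelöf
  have hPL : IsPicardLindelof v (tmin := 0) (tmax := T) ⟨0, h0T⟩ Y₀ (M1 * T).toNNReal 0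
      M1.toNNReal cδ.toNNReal := by
    refine ⟨fun t _ => (hvl t).lipschitzOnWith, ?_, ?_, ?_⟩
    · intro x _
      exact (hvc.comp (continuous_id.prodMk continuous_const)).continuousOn
    · intro t _ x _
      rw [Real.norm_eq_abs, Real.coe_toNNReal _ hM10]
      exact hvB t x
    · simp only [Real.coe_toNNReal _ hM10, NNReal.coe_zero, sub_zero, sub_self, max_eq_left hT.le,
        tsub_zero]
      rw [Real.coe_toNNReal _ (mul_nonneg hM10 hT.le)]
  obtain ⟨X, hX0, hXd⟩ := hPL.exists_eq_forall_mem_Icc_hasDerivWithinAt₀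
  have hX0 : X 0 = Y₀ := hX0
  have hXc : ContinuousOn X (Set.Icc 0 T) := fun t ht => (hXd t ht).continuousWithinAt
  -- integral representation of X
  have hvXc : ContinuousOn (fun s => v s (X s)) (Set.Icc 0 T) :=
    hvc.comp_continuousOn (continuousOn_id.prodMk hXc)
  have hXint : ∀ t ∈ Set.Icc 0 T, X t = Y₀ + ∫ s in (0:ℝ)..t, v s (X s) := by
    intro t ht
    have hXct : ContinuousOn X (Set.Icc 0 t) := hXc.mono (Set.Icc_subset_Icc le_rfl ht.2)
    have hd : ∀ x ∈ Set.Ioo 0 t, HasDerivWithinAt X (v x (X x)) (Set.Ioi x) x := by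
      intro x hx
      exact ((hXd x ⟨hx.1.le, hx.2.le.trans ht.2⟩).hasDerivAt
        (Icc_mem_nhds hx.1 (lt_of_lt_of_le hx.2 ht.2))).hasDerivWithinAt
    have hint : IntervalIntegrable (fun s => v s (X s)) volume 0 t := by
      apply ContinuousOn.intervalIntegrable
      rw [uIcc_of_le ht.1]
      exact hvXc.mono (Set.Icc_subset_Icc le_rfl ht.2)
    have := intervalIntegral.integral_eq_sub_of_hasDeriv_right_of_le ht.1 hXct hd hint
    rw [this, hX0]
    ring
  -- the candidate solution
  set Y : ℝ → ℝ := fun t => X (τc t) + Zc t with hYdef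
  have hYc : Continuous Y := (hXc.comp_continuous hτcc hτcmem).add hZcc
  have hYeqXZ : ∀ t ∈ Set.Icc 0 T, Y t = X t + Z t := by
    intro t ht
    simp only [hYdef, hZcdef]
    rw [hτcid t ht]
  have heqbb : ∀ t ∈ Set.Icc 0 T, Y t = Y₀ + (∫ s in (0:ℝ)..t, bb s (Y s)) + Zc t := by
    intro t ht
    have hcongr : ∀ s ∈ Set.uIcc (0:ℝ) t, v s (X s) = bb s (Y s) := by
      intro s hs
      rw [uIcc_of_le ht.1] at hs
      have hsT : s ∈ Set.Icc 0 T := ⟨hs.1, hs.2.trans ht.2⟩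
      simp only [hvdef, hYdef]
      rw [hτcid s hsT]
    rw [hYeqXZ t ht, hXint t ht, intervalIntegral.integral_congr hcongr, hZcid t ht]
  -- verify the hypotheses of the a priori bound for Y (with drift bb)
  have hHA' : ∀ s ∈ Set.Icc 0 T, ∀ t ∈ Set.Icc 0 T,
      |pc t - pc s| + |sc t - sc s| + |Zc t - Zc s| ≤ A * |t - s| ^ lam := by
    intro s hs t ht
    rw [hpcid s hs, hpcid t ht, hscid s hs, hscid t ht, hZcid s hs, hZcid t ht]
    have h1 := hHol s hs t ht
    have h2 := hZH s hs t ht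
    have h3 : (0:ℝ) ≤ |t - s| ^ lam := Real.rpow_nonneg (abs_nonneg _) lam
    rw [hAdef]
    nlinarith
  have hZc0 : Zc 0 = 0 := by rw [hZcid 0 h0T, hZ0]
  have hpc0 : pc 0 = phi 0 := hpcid 0 h0T
  have hsc0 : sc 0 = psi 0 := hscid 0 h0T
  have hrmono : ∀ x : ℝ, 0 < x → x ≤ ε → c * ε ^ (-gam) ≤ c * x ^ (-gam) := by
    intro x hx hxε
    exact mul_le_mul_of_nonneg_left
      (Real.rpow_le_rpow_of_nonpos hx hxε (neg_nonpos.mpr hgam0.le)) hc.le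
  -- a priori bound for Y
  have hbandY : ∀ t ∈ Set.Icc 0 T, ε / 2 < Y t - pc t ∧ ε / 2 < sc t - Y t := by
    refine sandApriori T lam gam c ε A Y₀ pc sc Zc Y bb hT hε hkeyε hpcc hscc hZcc hYc hHA'
      heqbb (by rw [hpc0]; exact hεY0l) (by rw [hsc0]; exact hεY0u) hZc0 ?_ ?_ ?_
    · intro t _ _
      exact (hbbc.comp (continuous_id.prodMk hYc)).continuousOn
    · -- lower blow-up for bb
      intro s hs h1 h2 h3
      rw [hpcid s hs] at h1 h2
      rw [hscid s hs] at h3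
      set y' := proj s (Y s) with hy'def
      have hpcs := hpcid s hs
      have hscs := hscid s hs
      have hy'1 : phi s < y' := by
        have := hproj_ge s (Y s); rw [hpcs] at this; linarith
      have hy'2 : y' < psi s := by
        have := hproj_le s (Y s); rw [hscs] at this; linarith
      have hy'le : y' - phi s ≤ ε := by
        have hmax : y' ≤ phi s + ε := by
          apply max_le
          · rw [hpcs]; linarith
          · exact le_trans (min_le_left _ _) (by linarith)
        linarith
      have hb := hblow₁ s hs y' hy'1 hy'2 (by linarith)
      have hbb_eq : bb s (Y s) = b s y' := by
        simp only [hbbdef]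
        rw [hτcid s hs]
      rw [hbb_eq]
      exact le_trans (hrmono (y' - phi s) (by linarith) hy'le) hb
    · -- upper blow-up for bb
      intro s hs h1 h2 h3
      rw [hscid s hs] at h1 h2
      rw [hpcid s hs] at h3
      set y' := proj s (Y s) with hy'def
      have hpcs := hpcid s hs
      have hscs := hscid s hs
      have hy'1 : phi s < y' := by
        have := hproj_ge s (Y s); rw [hpcs] at this; linarith
      have hy'2 : y' < psi s := by
        have := hproj_le s (Y s); rw [hscs] at this; linarith
      have hy'le : psi s - y' ≤ ε := by
        have hmin : psi s - ε ≤ min (Y s) (sc s - δ) := by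
          apply le_min
          · linarith
          · rw [hscs]; linarith
        have := le_trans hmin (le_max_right (pc s + δ) _)
        linarith
      have hb := hblow₂ s hs y' hy'1 hy'2 (by linarith)
      have hbb_eq : bb s (Y s) = b s y' := by
        simp only [hbbdef]
        rw [hτcid s hs]
      rw [hbb_eq]
      have := hrmono (psi s - y') (by linarith) hy'le
      linarith
  -- Y stays in the non-truncated region, so it solves the original equation
  have hprojY : ∀ s ∈ Set.Icc 0 T, proj s (Y s) = Y s := by
    intro s hs
    obtain ⟨hb1, hb2⟩ := hbandY s hs
    clear_value Y pc sc
    have g1 : pc s + δ ≤ Y s := by linarith [hb1, hδε]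
    have g2 : Y s ≤ sc s - δ := by linarith [hb2, hδε]
    exact hproj_id s (Y s) g1 g2
  have heqb : ∀ t ∈ Set.Icc 0 T, Y t = Y₀ + (∫ s in (0:ℝ)..t, b s (Y s)) + Z t := by
    intro t ht
    have hcongr : ∀ s ∈ Set.uIcc (0:ℝ) t, bb s (Y s) = b s (Y s) := by
      intro s hs
      rw [uIcc_of_le ht.1] at hs
      have hsT : s ∈ Set.Icc 0 T := ⟨hs.1, hs.2.trans ht.2⟩
      simp only [hbbdef]
      rw [hprojY s hsT, hτcid s hsT]
    rw [heqbb t ht, intervalIntegral.integral_congr hcongr, hZcid t ht]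
  have hsand : ∀ t ∈ Set.Icc 0 T, phi t < Y t ∧ Y t < psi t := by
    intro t ht
    obtain ⟨hb1, hb2⟩ := hbandY t ht
    rw [hpcid t ht] at hb1
    rw [hscid t ht] at hb2
    clear_value Y
    constructor <;> linarith
  refine ⟨Y, ⟨hYc.continuousOn, heqb, hsand⟩, ?_⟩
  -- uniqueness
  intro Y' hY'c hY'eq
  set W' : ℝ → ℝ := fun t => Y' (τc t) with hW'def
  have hW'c : Continuous W' := hY'c.comp_continuous hτcc hτcmem
  have hW'id : ∀ t ∈ Set.Icc 0 T, W' t = Y' t := by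
    intro t ht; simp only [hW'def]; rw [hτcid t ht]
  have heq' : ∀ t ∈ Set.Icc 0 T, W' t = Y₀ + (∫ s in (0:ℝ)..t, b s (W' s)) + Zc t := by
    intro t ht
    have hcongr : ∀ s ∈ Set.uIcc (0:ℝ) t, b s (Y' s) = b s (W' s) := by
      intro s hs
      rw [uIcc_of_le ht.1] at hs
      have hsT : s ∈ Set.Icc 0 T := ⟨hs.1, hs.2.trans ht.2⟩
      rw [hW'id s hsT]
    rw [hW'id t ht, hY'eq t ht, intervalIntegral.integral_congr hcongr, hZcid t ht]
  have hbandY' : ∀ t ∈ Set.Icc 0 T, ε / 2 < W' t - pc t ∧ ε / 2 < sc t - W' t := by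
    refine sandApriori T lam gam c ε A Y₀ pc sc Zc W' b hT hε hkeyε hpcc hscc hZcc hW'c hHA'
      heq' (by rw [hpc0]; exact hεY0l) (by rw [hsc0]; exact hεY0u) hZc0 ?_ ?_ ?_
    · -- continuity of the composed drift before exit
      intro t ht hband
      have hmap : ∀ s ∈ Set.Icc 0 t, ((s, W' s) : ℝ × ℝ) ∈
          {p : ℝ × ℝ | p.1 ∈ Set.Icc 0 T ∧ phi p.1 < p.2 ∧ p.2 < psi p.1} := by
        intro s hs
        have hsT : s ∈ Set.Icc 0 T := ⟨hs.1, hs.2.trans ht.2⟩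
        obtain ⟨hb1, hb2⟩ := hband s hs
        rw [hpcid s hsT] at hb1
        rw [hscid s hsT] at hb2
        exact ⟨hsT, by linarith, by linarith⟩
      exact hbc.comp (continuousOn_id.prodMk hW'c.continuousOn) hmap
    · intro s hs h1 h2 h3
      rw [hpcid s hs] at h1 h2
      rw [hscid s hs] at h3
      have hb := hblow₁ s hs (W' s) (by linarith) (by linarith) (by linarith)
      exact le_trans (hrmono (W' s - phi s) (by linarith) h2) hb
    · intro s hs h1 h2 h3
      rw [hscid s hs] at h1 h2
      rw [hpcid s hs] at h3
      have hb := hblow₂ s hs (W' s) (by linarith) (by linarith) (by linarith)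
      have := hrmono (psi s - W' s) (by linarith) h2
      linarith
  -- Gronwall uniqueness via the globally Lipschitz field v
  have hprojY' : ∀ s ∈ Set.Icc 0 T, proj s (W' s) = W' s := by
    intro s hs
    obtain ⟨hb1, hb2⟩ := hbandY' s hs
    exact hproj_id s (W' s) (by linarith) (by linarith)
  set ug : ℝ → ℝ := fun s => b (τc s) (W' s) with hugdef
  have hW'τ : ∀ s : ℝ, W' (τc s) = W' s := by
    intro s; simp only [hW'def, hτcidem]
  have hugc : Continuous ug := by
    have hmap : Continuous fun s : ℝ => ((τc s, W' s) : ℝ × ℝ) := hτcc.prodMk hW'c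
    refine hbc.comp_continuous hmap ?_
    intro s
    have hmem := hτcmem s
    obtain ⟨hb1, hb2⟩ := hbandY' (τc s) hmem
    rw [hW'τ s] at hb1 hb2
    refine ⟨hmem, ?_, ?_⟩
    · rw [← hpcid (τc s) hmem]; linarith [hb1]
    · rw [← hscid (τc s) hmem]; linarith [hb2]
  set Xg : ℝ → ℝ := fun t => W' t - Zc t with hXgdef
  have hXgc : Continuous Xg := hW'c.sub hZcc
  set Fg : ℝ → ℝ := fun t => Y₀ + ∫ s in (0:ℝ)..t, ug s with hFgdef
  have hFgd : ∀ t : ℝ, HasDerivAt Fg (ug t) t := by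
    intro t
    exact ((hugc.integral_hasStrictDerivAt 0 t).hasDerivAt).const_add Y₀
  have hFgeq : ∀ t ∈ Set.Icc 0 T, Xg t = Fg t := by
    intro t ht
    have hcongr : ∀ s ∈ Set.uIcc (0:ℝ) t, b s (W' s) = ug s := by
      intro s hs
      rw [uIcc_of_le ht.1] at hs
      have hsT : s ∈ Set.Icc 0 T := ⟨hs.1, hs.2.trans ht.2⟩
      simp only [hugdef]
      rw [hτcid s hsT]
    simp only [hXgdef, hFgdef]
    rw [heq' t ht, ← intervalIntegral.integral_congr hcongr]
    ring
  have hIcc_mem : ∀ t ∈ Set.Ico 0 T, Set.Icc 0 T ∈ nhdsWithin t (Set.Ici t) := by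
    intro t ht
    apply mem_nhdsWithin.mpr
    exact ⟨Set.Iio T, isOpen_Iio, ht.2, fun x hx => ⟨ht.1.trans hx.2, hx.1.le⟩⟩
  have hXgd : ∀ t ∈ Set.Ico 0 T, HasDerivWithinAt Xg (v t (Xg t)) (Set.Ici t) t := by
    intro t ht
    have htIcc : t ∈ Set.Icc 0 T := ⟨ht.1, ht.2.le⟩
    have h1 : HasDerivWithinAt Xg (ug t) (Set.Icc 0 T) t :=
      ((hFgd t).hasDerivWithinAt).congr hFgeq (hFgeq t htIcc)
    have h3 := h1.mono_of_mem_nhdsWithin (hIcc_mem t ht)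
    have hval : v t (Xg t) = ug t := by
      simp only [hvdef, hXgdef, hugdef, hbbdef]
      rw [sub_add_cancel, hprojY' t htIcc, hτcid t htIcc]
    rw [hval]
    exact h3
  have hXd' : ∀ t ∈ Set.Ico 0 T, HasDerivWithinAt X (v t (X t)) (Set.Ici t) t := by
    intro t ht
    exact (hXd t ⟨ht.1, ht.2.le⟩).mono_of_mem_nhdsWithin (hIcc_mem t ht)
  have hXg0 : X 0 = Xg 0 := by
    have hY'0 : Y' 0 = Y₀ := by
      have := hY'eq 0 h0T
      simpa [intervalIntegral.integral_same, hZ0] using this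
    simp only [hXgdef]
    rw [hW'id 0 h0T, hY'0, hZc0, hX0]
    ring
  have huniq : Set.EqOn X Xg (Set.Icc 0 T) :=
    ODE_solution_unique hvl hXc hXd' hXgc.continuousOn hXgd hXg0
  intro t ht
  have h1 := huniq ht
  have h2 : Xg t = Y' t - Z t := by
    simp only [hXgdef]
    rw [hW'id t ht, hZcid t ht]
  have h3 := hYeqXZ t ht
  rw [h2] at h1
  linarith [h1, h3]
end
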